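/- Let X be a δ-hyperbolic geodesic metric space and H a collection of uniformly C-quasiconvex subsets. Then the electric space E(X,H) is Δ-hyperbolic, where Δ depends only on δ and C. In particular, X is weakly hyperbolic relative to H. -/

import Mathlib

open Metric Set Filter

/-- The Gromov four-point condition: the distance function `d` is `δ`-hyperbolic. -/
def GromovHyperbolicWith {X : Type*} (d : X → X → ℝ) (δ : ℝ) : Prop :=
  ∀ x y z w : X, d x y + d z w ≤ max (d x z + d y w) (d x w + d y z) + 2 * δ

/-- `f` restricted to `[s, t]` is a unit-speed geodesic for the distance function `d`. -/
def IsGeodesicWith {X : Type*} (d : X → X → ℝ) (f : ℝ → X) (s t : ℝ) : Prop :=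
  ∀ u ∈ Set.Icc s t, ∀ v ∈ Set.Icc s t, d (f u) (f v) = |u - v|

/-- A geodesic segment for the metric of `X`. -/
def IsGeodesicSegment {X : Type*} [PseudoMetricSpace X] (f : ℝ → X) (s t : ℝ) : Prop :=
  IsGeodesicWith (fun a b => dist a b) f s t

/-- `X` is a geodesic metric space. -/
def GeodesicSpace (X : Type*) [PseudoMetricSpace X] : Prop :=
  ∀ x y : X, ∃ f : ℝ → X, f 0 = x ∧ f (dist x y) = y ∧ IsGeodesicSegment f 0 (dist x y)

/-- A `(P, P)`-quasigeodesic with respect to the distance function `d`. -/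
def QuasiGeodesicWith {X : Type*} (d : X → X → ℝ) (P s t : ℝ) (f : ℝ → X) : Prop :=
  ∀ u ∈ Set.Icc s t, ∀ v ∈ Set.Icc s t,
    |u - v| / P - P ≤ d (f u) (f v) ∧ d (f u) (f v) ≤ P * |u - v| + P

/-- A subset `A` is `C`-quasiconvex: any geodesic joining two points of `A` stays in the
`C`-neighbourhood of `A`. -/
def QuasiconvexSet {X : Type*} [PseudoMetricSpace X] (C : ℝ) (A : Set X) : Prop :=
  ∀ x ∈ A, ∀ y ∈ A, ∀ (f : ℝ → X) (s t : ℝ),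
    IsGeodesicSegment f s t → f s = x → f t = y →
    ∀ u ∈ Set.Icc s t, Metric.infDist (f u) A ≤ C

open Classical in
/-- Cost of an elementary step in the electric (coned-off) space: inside a coned-off set of
the collection the cost is at most `1` (travel through the cone point). -/
noncomputable def stepCost {X : Type*} [PseudoMetricSpace X] (H : Set (Set X)) (a b : X) : ℝ :=
  if ∃ A ∈ H, a ∈ A ∧ b ∈ A then min 1 (dist a b) else dist a b

/-- The electric pseudometric of Farb on `X`, obtained by electrocuting (coning off) each
set of the collection `H`. -/
noncomputable def elecDist {X : Type*} [PseudoMetricSpace X] (H : Set (Set X)) (x y : X) : ℝ :=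
  sInf {r : ℝ | ∃ (n : ℕ) (c : Fin (n + 1) → X), c 0 = x ∧ c (Fin.last n) = y ∧
    r = ∑ i : Fin n, stepCost H (c i.castSucc) (c i.succ)}

/-- An electro-ambient `P`-quasigeodesic without backtracking: a `P`-quasigeodesic for the
electric metric which traverses each electrocuted set along a genuine geodesic of `X`
(the maximal subsegments through a coned-off set have been replaced by geodesics of `X`). -/
def ElectroAmbientQG {X : Type*} [PseudoMetricSpace X] (H : Set (Set X)) (P s t : ℝ)
    (f : ℝ → X) : Prop :=
  QuasiGeodesicWith (elecDist H) P s t f ∧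
    ∀ A ∈ H, ∀ u v : ℝ, s ≤ u → u ≤ v → v ≤ t → (∀ w ∈ Set.Icc u v, f w ∈ A) →
      IsGeodesicSegment f u v

/-- Geodesic convexity of a subset. -/
def GeodConvex {X : Type*} [PseudoMetricSpace X] (A : Set X) : Prop :=
  ∀ (f : ℝ → X) (s t : ℝ), IsGeodesicSegment f s t → f s ∈ A → f t ∈ A →
    ∀ u ∈ Set.Icc s t, f u ∈ A

/-- The geodesic convex hull of a subset. -/
def geodHull {X : Type*} [PseudoMetricSpace X] (A : Set X) : Set X :=
  ⋂₀ {C : Set X | A ⊆ C ∧ GeodConvex C}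

/-- The Gromov product of `x` and `y` based at `o`. -/
noncomputable def gromovProd {X : Type*} [PseudoMetricSpace X] (o x y : X) : ℝ :=
  (dist o x + dist o y - dist x y) / 2

/-- A metrically proper map. -/
def MetricallyProper {X Y : Type*} [PseudoMetricSpace X] [PseudoMetricSpace Y]
    (i : Y → X) : Prop :=
  ∀ (y₀ : Y) (R : ℝ), ∃ N : ℝ, ∀ y : Y, N ≤ dist y y₀ → R ≤ dist (i y) (i y₀)

/-- `K` is precisely invariant under the action of `G`: the universal-cover formulation of
`π₁`-injectivity (incompressibility) of the piece of the quotient corresponding to `K`. -/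
def PreciselyInvariant (G : Type*) [Group G] {M : Type*} [MulAction G M] (K : Set M) : Prop :=
  ∀ g : G, (∃ x ∈ K, g • x ∈ K) → ∀ x ∈ K, g • x ∈ K

/-- No parabolics: every nontrivial element of the group achieves its minimal displacement
(so every nontrivial element is hyperbolic rather than parabolic). -/
def NoParabolics (G : Type*) (M : Type*) [Group G] [MulAction G M]
    [PseudoMetricSpace M] : Prop :=
  ∀ g : G, g ≠ 1 → ∃ x : M, ∀ y : M, dist (g • x) x ≤ dist (g • y) y

open Metric Set

namespace ES
variable {X : Type} [MetricSpace X] (H : Set (Set X))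

lemma stepCost_nonneg (a b : X) : 0 ≤ stepCost H a b := by
  unfold stepCost; split
  · exact le_min zero_le_one dist_nonneg
  · exact dist_nonneg

lemma stepCost_le_dist (a b : X) : stepCost H a b ≤ dist a b := by
  unfold stepCost; split
  · exact min_le_right _ _
  · exact le_rfl

lemma stepCost_comm (a b : X) : stepCost H a b = stepCost H b a := by
  unfold stepCost
  by_cases h : ∃ A ∈ H, a ∈ A ∧ b ∈ A
  · have h' : ∃ A ∈ H, b ∈ A ∧ a ∈ A := by
      obtain ⟨A, hA, ha, hb⟩ := h; exact ⟨A, hA, hb, ha⟩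
    rw [if_pos h, if_pos h', dist_comm]
  · have h' : ¬ ∃ A ∈ H, b ∈ A ∧ a ∈ A := by
      rintro ⟨A, hA, hb, ha⟩; exact h ⟨A, hA, ha, hb⟩
    rw [if_neg h, if_neg h', dist_comm]

lemma stepCost_self (a : X) : stepCost H a a = 0 := by
  unfold stepCost; split
  · simp [dist_self]
  · exact dist_self a

lemma dist_le_stepCost {a b : X} (h : stepCost H a b < 1) : dist a b ≤ stepCost H a b := by
  unfold stepCost at h ⊢; split at h <;> rename_i hc
  · rw [if_pos hc]
    rcases le_total (dist a b) 1 with h1 | h1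
    · rw [min_eq_right h1]
    · rw [min_eq_left h1] at h ⊢; linarith
  · rw [if_neg hc]

lemma step_dichotomy (a b : X) :
    (∃ A ∈ H, a ∈ A ∧ b ∈ A) ∨ stepCost H a b = dist a b := by
  unfold stepCost; split <;> [left; right] <;> first | assumption | rfl

/-- cost of a chain given as the full list of its points. -/
noncomputable def cCost : List X → ℝ
  | [] => 0
  | [_] => 0
  | a :: b :: t => stepCost H a b + cCost (b :: t)

@[simp] lemma cCost_nil : cCost H ([] : List X) = 0 := rfl
@[simp] lemma cCost_single (a : X) : cCost H [a] = 0 := rfl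
lemma cCost_cons_cons (a b : X) (t : List X) :
    cCost H (a :: b :: t) = stepCost H a b + cCost H (b :: t) := rfl

lemma cCost_nonneg (l : List X) : 0 ≤ cCost H l := by
  induction l with
  | nil => simp
  | cons a t ih =>
    cases t with
    | nil => simp
    | cons b t' =>
      rw [cCost_cons_cons]
      exact add_nonneg (stepCost_nonneg H a b) ih

/-- key splitting identity. -/
lemma cCost_append_cons (l : List X) (m : X) (t : List X) :
    cCost H (l ++ m :: t) = cCost H (l ++ [m]) + cCost H (m :: t) := by
  induction l with
  | nil => simp
  | cons a l' ih =>
    cases l' with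
    | nil =>
      simp only [List.cons_append, List.nil_append, cCost_cons_cons, cCost_single]
      ring
    | cons b l'' =>
      simp only [List.cons_append, cCost_cons_cons] at *
      rw [ih]; ring

lemma cCost_reverse (l : List X) : cCost H l.reverse = cCost H l := by
  induction l with
  | nil => simp
  | cons a t ih =>
    cases t with
    | nil => simp
    | cons b t' =>
      have : (a :: b :: t').reverse = (b :: t').reverse ++ [a] := by simp
      rw [this]
      have h2 : (b :: t').reverse = t'.reverse ++ [b] := by simp
      calc cCost H ((b :: t').reverse ++ [a])
          = cCost H ((b::t').reverse ++ a :: []) := rfl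
        _ = cCost H ((b::t').reverse ++ [a]) := rfl
        _ = cCost H (t'.reverse ++ [b] ++ a :: []) := by rw [h2]
        _ = cCost H (t'.reverse ++ [b] ++ [a]) := rfl
        _ = cCost H (t'.reverse ++ b :: [a]) := by simp
        _ = cCost H (t'.reverse ++ [b]) + cCost H [b, a] := by rw [cCost_append_cons]
        _ = cCost H ((b::t').reverse) + cCost H [b, a] := by rw [h2]
        _ = cCost H (b :: t') + stepCost H b a := by
              rw [ih]; simp [cCost_cons_cons]
        _ = stepCost H a b + cCost H (b :: t') := by rw [stepCost_comm]; ring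
        _ = cCost H (a :: b :: t') := rfl

end ES

set_option linter.unusedSectionVars false
set_option linter.unusedVariables false
open Metric Set

namespace ES
variable {X : Type} [MetricSpace X] (H : Set (Set X))

/-- `l` is a chain from `x` to `y`. -/
def IsCh (x y : X) (l : List X) : Prop :=
  l ≠ [] ∧ l.head? = some x ∧ l.getLast? = some y

lemma isCh_pair (x y : X) : IsCh x y [x, y] := ⟨by simp, rfl, rfl⟩

lemma sum_eq_cCost (n : ℕ) (c : Fin (n+1) → X) :
    ∑ i : Fin n, stepCost H (c i.castSucc) (c i.succ) = cCost H (List.ofFn c) := by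
  induction n with
  | zero => simp
  | succ n ih =>
    rw [Fin.sum_univ_succ, List.ofFn_succ]
    have h2 : List.ofFn (fun i : Fin (n+1) => c i.succ)
        = c (Fin.succ 0) :: List.ofFn (fun i : Fin n => c (Fin.succ (Fin.succ i))) := by
      rw [List.ofFn_succ]
    rw [h2, cCost_cons_cons, ← h2]
    have h3 : ∑ i : Fin n, stepCost H (c i.succ.castSucc) (c i.succ.succ)
        = cCost H (List.ofFn fun i : Fin (n+1) => c i.succ) := by
      have := ih (fun i => c i.succ)
      simp only [Fin.succ_castSucc] at this
      exact this
    rw [h3]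
    simp [Fin.castSucc_zero, Fin.succ_zero_eq_one]

/-- the defining set of `elecDist`. -/
def chSet (x y : X) : Set ℝ :=
  {r : ℝ | ∃ (n : ℕ) (c : Fin (n + 1) → X), c 0 = x ∧ c (Fin.last n) = y ∧
    r = ∑ i : Fin n, stepCost H (c i.castSucc) (c i.succ)}

lemma elecDist_eq_sInf (x y : X) : elecDist H x y = sInf (chSet H x y) := rfl

lemma cCost_mem_chSet {x y : X} {l : List X} (hl : IsCh x y l) :
    cCost H l ∈ chSet H x y := by
  obtain ⟨hne, hh, ht⟩ := hl
  have hpos : 0 < l.length := List.length_pos_iff.2 hne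
  refine ⟨l.length - 1, fun i => l[(i : ℕ)]'(by have := i.isLt; omega), ?_, ?_, ?_⟩
  · simp only [Fin.val_zero]
    rw [List.getElem_zero hpos]
    rw [List.head?_eq_head hne] at hh
    exact Option.some_injective _ hh
  · simp only [Fin.val_last]
    rw [← List.getLast_eq_getElem hne]
    rw [List.getLast?_eq_getLast hne] at ht
    exact Option.some_injective _ ht
  · have hofn : List.ofFn (fun i : Fin (l.length - 1 + 1) => l[(i : ℕ)]'(by have := i.isLt; omega)) = l := by
      apply List.ext_getElem
      · simp; omega
      · intro n h1 h2
        cases n with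
        | zero => simp
        | succ m => simp
    conv_lhs => rw [← hofn]
    rw [← sum_eq_cCost]

lemma chSet_nonneg {x y : X} {r : ℝ} (hr : r ∈ chSet H x y) : 0 ≤ r := by
  obtain ⟨n, c, -, -, rfl⟩ := hr
  exact Finset.sum_nonneg fun i _ => stepCost_nonneg H _ _

lemma chSet_bddBelow (x y : X) : BddBelow (chSet H x y) :=
  ⟨0, fun r hr => chSet_nonneg H hr⟩

lemma chSet_nonempty (x y : X) : (chSet H x y).Nonempty :=
  ⟨_, cCost_mem_chSet H (isCh_pair x y)⟩

lemma elecDist_nonneg (x y : X) : 0 ≤ elecDist H x y :=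
  le_csInf (chSet_nonempty H x y) fun r hr => chSet_nonneg H hr

lemma elecDist_le_cCost {x y : X} {l : List X} (hl : IsCh x y l) :
    elecDist H x y ≤ cCost H l :=
  csInf_le (chSet_bddBelow H x y) (cCost_mem_chSet H hl)

lemma exists_chain_lt (x y : X) {ε : ℝ} (hε : 0 < ε) :
    ∃ l : List X, IsCh x y l ∧ cCost H l < elecDist H x y + ε := by
  obtain ⟨r, hr, hlt⟩ := exists_lt_of_csInf_lt (chSet_nonempty H x y)
    (lt_add_of_pos_right (elecDist H x y) hε)
  obtain ⟨n, c, h0, hl, rfl⟩ := hr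
  refine ⟨List.ofFn c, ⟨?_, ?_, ?_⟩, ?_⟩
  · simp [← List.length_pos_iff, List.length_ofFn]
  · rw [List.ofFn_succ]; simp [h0]
  · have hne : (List.ofFn c) ≠ [] := by simp [← List.length_pos_iff, List.length_ofFn]
    rw [List.getLast?_eq_getLast hne, List.getLast_eq_getElem hne]
    have hlen : (List.ofFn c).length = n + 1 := List.length_ofFn
    simp only [hlen]
    rw [List.getElem_ofFn]
    simp [← hl, Fin.last]
  · rwa [← sum_eq_cCost]

lemma elecDist_self (x : X) : elecDist H x x = 0 := by
  refine le_antisymm ?_ (elecDist_nonneg H x x)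
  have : IsCh x x [x] := ⟨by simp, rfl, rfl⟩
  simpa using elecDist_le_cCost H this

lemma elecDist_le_dist (x y : X) : elecDist H x y ≤ dist x y := by
  have := elecDist_le_cCost H (isCh_pair x y)
  calc elecDist H x y ≤ cCost H [x, y] := this
    _ = stepCost H x y := by simp [cCost_cons_cons]
    _ ≤ dist x y := stepCost_le_dist H x y

lemma elecDist_le_one {x y : X} {A : Set X} (hA : A ∈ H) (hx : x ∈ A) (hy : y ∈ A) :
    elecDist H x y ≤ 1 := by
  have := elecDist_le_cCost H (isCh_pair x y)
  have h2 : cCost H [x, y] = stepCost H x y := by simp [cCost_cons_cons]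
  have h3 : stepCost H x y ≤ 1 := by
    unfold stepCost
    rw [if_pos ⟨A, hA, hx, hy⟩]
    exact min_le_left _ _
  linarith

lemma IsCh.reverse {x y : X} {l : List X} (hl : IsCh x y l) : IsCh y x l.reverse := by
  obtain ⟨hne, hh, ht⟩ := hl
  exact ⟨by simpa using hne, by rwa [List.head?_reverse], by rwa [List.getLast?_reverse]⟩

lemma elecDist_symm (x y : X) : elecDist H x y = elecDist H y x := by
  have key : ∀ a b : X, elecDist H a b ≤ elecDist H b a := by
    intro a b
    refine le_of_forall_pos_le_add fun ε hε => ?_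
    obtain ⟨l, hl, hc⟩ := exists_chain_lt H b a hε
    have := elecDist_le_cCost H hl.reverse
    rw [cCost_reverse] at this
    linarith
  exact le_antisymm (key x y) (key y x)

lemma cCost_snoc (l : List X) (hne : l ≠ []) (c : X) :
    cCost H (l ++ [c]) = cCost H l + stepCost H (l.getLast hne) c := by
  induction l with
  | nil => simp at hne
  | cons a t ih =>
    cases t with
    | nil => simp [cCost_cons_cons]
    | cons b t' =>
      simp only [List.cons_append] at ih ⊢
      rw [cCost_cons_cons, ih (by simp), cCost_cons_cons]
      have hgl : (a :: b :: t').getLast hne = (b :: t').getLast (by simp) :=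
        List.getLast_cons (by simp)
      rw [hgl]; ring

lemma elecDist_triangle (x y z : X) :
    elecDist H x z ≤ elecDist H x y + elecDist H y z := by
  refine le_of_forall_pos_le_add fun ε hε => ?_
  obtain ⟨l₁, hl₁, hc₁⟩ := exists_chain_lt H x y (half_pos hε)
  obtain ⟨l₂, hl₂, hc₂⟩ := exists_chain_lt H y z (half_pos hε)
  obtain ⟨hne₁, hh₁, ht₁⟩ := hl₁
  obtain ⟨hne₂, hh₂, ht₂⟩ := hl₂
  obtain ⟨c, t, rfl⟩ : ∃ c t, l₂ = c :: t := by
    cases l₂ with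
    | nil => simp at hne₂
    | cons c t => exact ⟨c, t, rfl⟩
  have hcy : c = y := by simpa using hh₂
  subst hcy
  cases t with
  | nil =>
    have hz : c = z := by simpa using ht₂
    subst hz
    have h1 := elecDist_le_cCost H ⟨hne₁, hh₁, ht₁⟩
    have h2 : elecDist H c c = 0 := elecDist_self H c
    linarith
  | cons d t' =>
    have hch : IsCh x z (l₁ ++ d :: t') := by
      refine ⟨by simp [hne₁], ?_, ?_⟩
      · rw [List.head?_append, hh₁]; rfl
      · rw [List.getLast?_append]
        simpa using ht₂
    have hgl : (l₁.getLast hne₁) = c := by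
      rw [List.getLast?_eq_getLast hne₁] at ht₁; exact Option.some_injective _ ht₁
    have hcost : cCost H (l₁ ++ d :: t') ≤ cCost H l₁ + cCost H (c :: d :: t') := by
      rw [cCost_append_cons, cCost_snoc H l₁ hne₁ d, cCost_cons_cons, hgl]
      linarith [le_refl (0:ℝ)]
    have := elecDist_le_cCost H hch
    linarith

end ES

set_option linter.unusedSectionVars false
set_option linter.unusedVariables false
open Metric Set

namespace ES
variable {X : Type} [MetricSpace X] (H : Set (Set X))

lemma stepCost_cases (a b : X) :
    stepCost H a b = dist a b ∨ (stepCost H a b = 1 ∧ ∃ A ∈ H, a ∈ A ∧ b ∈ A) := by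
  unfold stepCost
  by_cases hc : ∃ A ∈ H, a ∈ A ∧ b ∈ A
  · rw [if_pos hc]
    rcases le_total (dist a b) 1 with h | h
    · exact Or.inl (min_eq_right h)
    · exact Or.inr ⟨min_eq_left h, hc⟩
  · rw [if_neg hc]; exact Or.inl rfl

/-- splitting the cost of a chain at an interior point. -/
lemma cCost_take_drop (l : List X) (i : ℕ) (hi : i < l.length) :
    cCost H l = cCost H (l.take (i+1)) + cCost H (l.drop i) := by
  conv_lhs => rw [← List.take_append_drop i l]
  rw [List.drop_eq_getElem_cons hi, cCost_append_cons]
  congr 2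
  rw [← List.take_concat_get hi, List.concat_eq_append]

lemma IsCh_take {x y : X} {l : List X} (hch : IsCh x y l) (i : ℕ) (hi : i < l.length) :
    IsCh x (l[i]) (l.take (i+1)) := by
  obtain ⟨hne, hh, ht⟩ := hch
  refine ⟨List.ne_nil_of_length_pos (by rw [List.length_take]; omega), ?_, ?_⟩
  · rw [List.head?_take]; simp [hh]
  · rw [← List.take_concat_get hi, List.concat_eq_append, List.getLast?_concat]

lemma IsCh_drop {x y : X} {l : List X} (hch : IsCh x y l) (i : ℕ) (hi : i < l.length) :
    IsCh (l[i]) y (l.drop i) := by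
  obtain ⟨hne, hh, ht⟩ := hch
  have hd : l.drop i ≠ [] := List.ne_nil_of_length_pos (by rw [List.length_drop]; omega)
  refine ⟨hd, ?_, ?_⟩
  · rw [List.drop_eq_getElem_cons hi]; rfl
  · rw [List.getLast?_eq_getLast hd, List.getLast_drop]
    rwa [← List.getLast?_eq_getLast]

/-- prefix and suffix bounds. -/
lemma elec_split {x y : X} {l : List X} (hch : IsCh x y l) (i : ℕ) (hi : i < l.length) :
    elecDist H x (l[i]) + elecDist H (l[i]) y ≤ cCost H l := by
  have h1 := elecDist_le_cCost H (IsCh_take hch i hi)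
  have h2 := elecDist_le_cCost H (IsCh_drop hch i hi)
  have h3 := cCost_take_drop H l i hi
  linarith

/-- min of electric distances to the points of a list. -/
noncomputable def minE (q : X) : List X → ℝ
  | [] => 0
  | [a] => elecDist H q a
  | a :: b :: t => min (elecDist H q a) (minE q (b :: t))

lemma minE_le (q : X) {a : X} {l : List X} (ha : a ∈ l) : minE H q l ≤ elecDist H q a := by
  induction l with
  | nil => simp at ha
  | cons c t ih =>
    cases t with
    | nil => simp at ha; simp [minE, ha]
    | cons d t' =>
      rcases List.mem_cons.1 ha with h | h
      · subst h; exact min_le_left _ _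
      · exact le_trans (min_le_right _ _) (ih h)

lemma exists_minE (q : X) {l : List X} (hne : l ≠ []) : ∃ a ∈ l, minE H q l = elecDist H q a := by
  induction l with
  | nil => simp at hne
  | cons c t ih =>
    cases t with
    | nil => exact ⟨c, by simp, rfl⟩
    | cons d t' =>
      obtain ⟨a, ha, hea⟩ := ih (by simp)
      rcases min_cases (elecDist H q c) (minE H q (d :: t')) with ⟨h, _⟩ | ⟨h, _⟩
      · exact ⟨c, by simp, h⟩
      · exact ⟨a, List.mem_cons_of_mem _ ha, by rw [← hea]; exact h⟩

lemma le_minE (q : X) {l : List X} (hne : l ≠ []) {r : ℝ} (h : ∀ a ∈ l, r ≤ elecDist H q a) :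
    r ≤ minE H q l := by
  obtain ⟨a, ha, hea⟩ := exists_minE H q hne
  rw [hea]; exact h a ha

lemma minE_nonneg (q : X) (l : List X) : 0 ≤ minE H q l := by
  induction l with
  | nil => simp [minE]
  | cons c t ih =>
    cases t with
    | nil => exact elecDist_nonneg H q c
    | cons d t' => exact le_min (elecDist_nonneg H q c) ih

lemma minE_tri (p q : X) {l : List X} (hne : l ≠ []) :
    minE H p l ≤ elecDist H p q + minE H q l := by
  obtain ⟨a, ha, hea⟩ := exists_minE H q hne
  rw [hea]
  exact le_trans (minE_le H p ha) (elecDist_triangle H p q a)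

lemma minE_mono (q : X) {l l' : List X} (hne : l' ≠ []) (hsub : ∀ a ∈ l', a ∈ l) :
    minE H q l ≤ minE H q l' := by
  obtain ⟨a, ha, hea⟩ := exists_minE H q hne
  rw [hea]; exact minE_le H q (hsub a ha)

/-- points on geodesics between two points of an electrocuted set are electrically
close to both endpoints. -/
lemma qc_bound {C : ℝ} (hqc : ∀ A ∈ H, QuasiconvexSet C A) {A : Set X} (hA : A ∈ H)
    {a b : X} (ha : a ∈ A) (hb : b ∈ A) {g : ℝ → X}
    (hg : IsGeodesicSegment g 0 (dist a b)) (hg0 : g 0 = a) (hgT : g (dist a b) = b)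
    {s : ℝ} (hs : s ∈ Icc (0:ℝ) (dist a b)) :
    elecDist H (g s) a ≤ C + 1 ∧ elecDist H (g s) b ≤ C + 1 := by
  have hinf : infDist (g s) A ≤ C := hqc A hA a ha b hb g 0 (dist a b) hg hg0 hgT s hs
  have key : ∀ c ∈ A, elecDist H (g s) c ≤ C + 1 := by
    intro c hc
    refine le_of_forall_pos_le_add fun ε hε => ?_
    have hlt : infDist (g s) A < C + ε := lt_of_le_of_lt hinf (by linarith)
    obtain ⟨p, hp, hdp⟩ := (infDist_lt_iff ⟨a, ha⟩).1 hlt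
    have h1 : elecDist H (g s) c ≤ elecDist H (g s) p + elecDist H p c :=
      elecDist_triangle H _ _ _
    have h2 : elecDist H (g s) p ≤ dist (g s) p := elecDist_le_dist H _ _
    have h3 : elecDist H p c ≤ 1 := elecDist_le_one H hA hp hc
    linarith
  exact ⟨key a ha, key b hb⟩

/-- structure of a low-cost chain: either it moves a short distance, or it is expensive,
or it makes exactly one electric jump. -/
lemma chain_structure {x y : X} {l : List X} (hch : IsCh x y l)
    (h1 : List.Chain' (fun a b => stepCost H a b ≤ 1) l) :
    dist x y ≤ cCost H l ∨ 2 ≤ cCost H l ∨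
    ∃ A ∈ H, ∃ a ∈ l, ∃ b ∈ l, a ∈ A ∧ b ∈ A ∧ dist x a + 1 + dist b y ≤ cCost H l := by
  induction l generalizing x with
  | nil => exact absurd rfl hch.1
  | cons p t ih =>
    have hpx : x = p := by
      have := hch.2.1; simp at this; exact this.symm
    subst hpx
    cases t with
    | nil =>
      left
      have : x = y := by have := hch.2.2; simpa using this
      subst this; simp [dist_self]
    | cons q t' =>
      have hch' : IsCh q y (q :: t') := by
        refine ⟨by simp, rfl, ?_⟩
        have := hch.2.2
        simpa using this
      have h1' : List.Chain' (fun a b => stepCost H a b ≤ 1) (q :: t') := h1.tail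
      have hstep : stepCost H x q ≤ 1 := (List.isChain_cons_cons.1 h1).1
      have hcost : cCost H (x :: q :: t') = stepCost H x q + cCost H (q :: t') :=
        cCost_cons_cons H x q t'
      have hcost0 : 0 ≤ cCost H (q :: t') := cCost_nonneg H _
      have hstep0 : 0 ≤ stepCost H x q := stepCost_nonneg H x q
      rcases stepCost_cases H x q with hclean | ⟨hone, A, hAH, hxA, hqA⟩
      · rcases ih hch' h1' with hd | h2 | ⟨A, hAH, a, hal, b, hbl, haA, hbA, hj⟩
        · left
          have := dist_triangle x q y
          rw [hcost, hclean]; linarith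
        · right; left; rw [hcost]; linarith
        · right; right
          refine ⟨A, hAH, a, List.mem_cons_of_mem _ hal, b, List.mem_cons_of_mem _ hbl,
            haA, hbA, ?_⟩
          have := dist_triangle x q a
          rw [hcost, hclean]; linarith
      · rcases ih hch' h1' with hd | h2 | ⟨A', hAH', a, hal, b, hbl, haA, hbA, hj⟩
        · right; right
          refine ⟨A, hAH, x, by simp, q, by simp, hxA, hqA, ?_⟩
          rw [hcost, hone, dist_self]; linarith
        · right; left; rw [hcost]; linarith
        · right; left
          rw [hcost, hone]
          have d1 : 0 ≤ dist q a := dist_nonneg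
          have d2 : 0 ≤ dist b y := dist_nonneg
          linarith

end ES

set_option linter.unusedSectionVars false
set_option linter.unusedVariables false
open Metric Set

namespace ES
variable {X : Type} [MetricSpace X] (H : Set (Set X))

lemma dist_left {x y : X} {f : ℝ → X} (hf : IsGeodesicSegment f 0 (dist x y))
    (hf0 : f 0 = x) {u : ℝ} (hu : u ∈ Icc (0:ℝ) (dist x y)) :
    dist x (f u) = u := by
  have h := hf 0 ⟨le_refl 0, dist_nonneg⟩ u hu
  simp only at h
  rw [hf0] at h
  rw [h, abs_of_nonpos (by linarith [hu.1]), neg_sub, sub_zero]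

lemma dist_right {x y : X} {f : ℝ → X} (hf : IsGeodesicSegment f 0 (dist x y))
    (hfT : f (dist x y) = y) {u : ℝ} (hu : u ∈ Icc (0:ℝ) (dist x y)) :
    dist (f u) y = dist x y - u := by
  have h := hf u hu (dist x y) ⟨dist_nonneg, le_refl _⟩
  simp only at h
  rw [hfT] at h
  rw [h, abs_of_nonpos (by linarith [hu.2])]
  ring

/-- the point on a geodesic from `x` to `z` close to `w`, at parameter value the Gromov
product `(z|w)_x`. -/
lemma near_geo {δ : ℝ} (hδ0 : 0 ≤ δ) (h4 : GromovHyperbolicWith (fun a b : X => dist a b) δ)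
    {x z : X} {g : ℝ → X} (hg : IsGeodesicSegment g 0 (dist x z)) (hg0 : g 0 = x)
    (hgT : g (dist x z) = z) (w : X) :
    ∃ t ∈ Icc (0:ℝ) (dist x z),
      dist w (g t) ≤ (dist w x + dist w z - dist x z) / 2 + 2 * δ := by
  set t := (dist x z + dist w x - dist w z) / 2 with hts
  have tri1 : dist w z ≤ dist w x + dist x z := dist_triangle w x z
  have tri2 : dist w x ≤ dist w z + dist z x := dist_triangle w z x
  have hzx : dist z x = dist x z := dist_comm z x
  have h0t : 0 ≤ t := by rw [hts]; linarith
  have htT : t ≤ dist x z := by rw [hts]; linarith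
  have hmem : t ∈ Icc (0:ℝ) (dist x z) := ⟨h0t, htT⟩
  have e2 : dist x (g t) = t := dist_left hg hg0 hmem
  have e1 : dist (g t) z = dist x z - t := dist_right hg hgT hmem
  have h := h4 w (g t) x z
  simp only at h
  have hAB : dist w x + dist (g t) z = dist w z + dist (g t) x := by
    rw [e1, dist_comm (g t) x, e2, hts]; ring
  rw [hAB, max_self] at h
  refine ⟨t, hmem, ?_⟩
  have e2' : dist (g t) x = t := by rw [dist_comm]; exact e2
  rw [e2'] at h
  rw [hts] at h ⊢
  linarith

/-- thin triangles: a point on one side is `3δ`-close to one of the other two sides. -/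
lemma slim {δ : ℝ} (hδ0 : 0 ≤ δ) (h4 : GromovHyperbolicWith (fun a b : X => dist a b) δ)
    {x y z : X} {f g h : ℝ → X}
    (hf : IsGeodesicSegment f 0 (dist x y)) (hf0 : f 0 = x) (hfT : f (dist x y) = y)
    (hg : IsGeodesicSegment g 0 (dist x z)) (hg0 : g 0 = x) (hgT : g (dist x z) = z)
    (hh : IsGeodesicSegment h 0 (dist z y)) (hh0 : h 0 = z) (hhT : h (dist z y) = y)
    {u : ℝ} (hu : u ∈ Icc (0:ℝ) (dist x y)) :
    (∃ s ∈ Icc (0:ℝ) (dist x z), dist (f u) (g s) ≤ 3 * δ) ∨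
    (∃ s ∈ Icc (0:ℝ) (dist z y), dist (f u) (h s) ≤ 3 * δ) := by
  set p := f u with hp
  have dxp : dist x p = u := dist_left hf hf0 hu
  have dpy : dist p y = dist x y - u := dist_right hf hfT hu
  have h44 := h4 x y z p
  simp only at h44
  rcases max_cases (dist x z + dist y p) (dist x p + dist y z) with ⟨heq, _⟩ | ⟨heq, _⟩ <;>
    rw [heq] at h44
  · -- (x|z)_p ≤ δ
    left
    obtain ⟨s, hs, hd⟩ := near_geo hδ0 h4 hg hg0 hgT p
    refine ⟨s, hs, ?_⟩
    have hyp : dist y p = dist p y := dist_comm y p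
    have hpx : dist p x = dist x p := dist_comm p x
    have hzp : dist z p = dist p z := dist_comm z p
    -- from h44 : dist x y + dist z p ≤ dist x z + dist y p + 2δ
    -- so (dist p x + dist p z - dist x z)/2 ≤ δ
    have : (dist p x + dist p z - dist x z) / 2 ≤ δ := by
      rw [hpx, dxp, ← hzp]
      linarith
    linarith
  · right
    obtain ⟨s, hs, hd⟩ := near_geo hδ0 h4 hh hh0 hhT p
    refine ⟨s, hs, ?_⟩
    have hyp : dist y p = dist p y := dist_comm y p
    have hpx : dist p x = dist x p := dist_comm p x
    have hzp : dist z p = dist p z := dist_comm z p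
    have hyz : dist y z = dist z y := dist_comm y z
    have : (dist p z + dist p y - dist z y) / 2 ≤ δ := by
      rw [← hzp, dpy]
      linarith [hpx, dxp]
    linarith

end ES

set_option linter.unusedSectionVars false
set_option linter.unusedVariables false
open Metric Set

namespace ES
variable {X : Type} [MetricSpace X] (H : Set (Set X))

lemma head_mem_of_isCh {x y : X} {l : List X} (h : IsCh x y l) : x ∈ l := by
  obtain ⟨hne, hh, -⟩ := h
  rw [List.head?_eq_head hne] at hh
  have := Option.some_injective _ hh
  rw [← this]
  exact List.head_mem hne

lemma last_mem_of_isCh {x y : X} {l : List X} (h : IsCh x y l) : y ∈ l := by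
  obtain ⟨hne, -, ht⟩ := h
  rw [List.getLast?_eq_getLast hne] at ht
  have := Option.some_injective _ ht
  rw [← this]
  exact List.getLast_mem hne

lemma cCost_map_range (g : ℕ → X) (n : ℕ) :
    cCost H ((List.range (n+1)).map g) = ∑ i ∈ Finset.range n, stepCost H (g i) (g (i+1)) := by
  induction n with
  | zero =>
    show cCost H (List.map g (List.range 1)) = 0
    rw [show List.range 1 = [0] from rfl]
    simp
  | succ n ih =>
    rw [List.range_succ (n := n+1), List.map_append, Finset.sum_range_succ, ← ih]
    have hne : (List.range (n+1)).map g ≠ [] := by simp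
    rw [List.map_singleton, cCost_snoc H _ hne]
    congr 2
    rw [List.getLast_eq_getElem]
    simp

lemma getLast?_map_range (g : ℕ → X) (n : ℕ) :
    ((List.range (n+1)).map g).getLast? = some (g n) := by
  rw [List.range_succ, List.map_append, List.getLast?_append]
  simp

lemma head?_map_range (g : ℕ → X) (n : ℕ) :
    ((List.range (n+1)).map g).head? = some (g 0) := by
  rw [List.range_succ_eq_map]
  simp

/-- a single step can be refined into a chain with unit steps; the chain is produced
with its last point `b` split off. -/
lemma exists_unit_chain (hG : GeodesicSpace X) (a b : X) :
    ∃ m₀ : List X, m₀ ≠ [] ∧ (m₀ ++ [b]).head? = some a ∧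
      List.Chain' (fun u v => stepCost H u v ≤ 1) (m₀ ++ [b]) ∧
      cCost H (m₀ ++ [b]) ≤ stepCost H a b := by
  by_cases h1 : stepCost H a b ≤ 1
  · exact ⟨[a], by simp, rfl, List.isChain_pair.2 h1, by simp [cCost_cons_cons]⟩
  · push_neg at h1
    have hd : stepCost H a b = dist a b := by
      rcases stepCost_cases H a b with h | ⟨h, -⟩
      · exact h
      · rw [h] at h1; linarith
    obtain ⟨f, hf0, hfT, hf⟩ := hG a b
    set D := dist a b with hD
    have hD0 : 0 ≤ D := dist_nonneg
    have hD1 : 1 < D := by rw [← hd]; exact h1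
    set n := ⌈D⌉₊ with hn
    have hDn : D ≤ n := Nat.le_ceil D
    have hnR : (0:ℝ) < n := by linarith
    have hnne : (n:ℝ) ≠ 0 := ne_of_gt hnR
    set g : ℕ → X := fun i => f (i * D / n) with hg
    have hparam : ∀ i : ℕ, i ≤ n → (i * D / n) ∈ Icc (0:ℝ) D := by
      intro i hi
      constructor
      · positivity
      · rw [div_le_iff₀ hnR]
        have h1 : (i:ℝ) ≤ n := by exact_mod_cast hi
        nlinarith
    have key : ∀ r s : ℝ, r ∈ Icc 0 D → s ∈ Icc 0 D → dist (f r) (f s) = |r - s| :=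
      fun r s hr hs => hf r hr s hs
    have hdist : ∀ i : ℕ, i < n → dist (g i) (g (i+1)) = D / n := by
      intro i hi
      have h := key (i * D / n) ((i+1 : ℕ) * D / n) (hparam i (le_of_lt hi)) (hparam (i+1) hi)
      rw [hg]; simp only
      rw [h]
      have hc : ((i+1 : ℕ) : ℝ) = (i:ℝ) + 1 := by push_cast; ring
      rw [hc]
      have heq : ((i:ℝ) * D / n - ((i:ℝ)+1) * D / n) = -(D / n) := by field_simp; ring
      rw [heq, abs_neg, abs_of_nonneg (by positivity)]
    have hstep : ∀ i : ℕ, i < n → stepCost H (g i) (g (i+1)) ≤ D / n := by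
      intro i hi
      calc stepCost H (g i) (g (i+1)) ≤ dist (g i) (g (i+1)) := stepCost_le_dist H _ _
        _ = D / n := hdist i hi
    have hunit : ∀ i : ℕ, i < n → stepCost H (g i) (g (i+1)) ≤ 1 := by
      intro i hi
      refine le_trans (hstep i hi) ?_
      rw [div_le_one hnR]
      exact hDn
    have hcost : cCost H ((List.range (n+1)).map g) ≤ D := by
      rw [cCost_map_range]
      calc ∑ i ∈ Finset.range n, stepCost H (g i) (g (i+1))
          ≤ ∑ i ∈ Finset.range n, D / n := Finset.sum_le_sum fun i hi => hstep i (Finset.mem_range.1 hi)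
        _ = n * (D / n) := by rw [Finset.sum_const, Finset.card_range]; ring
        _ = D := by field_simp
    have hgn : g n = b := by
      rw [hg]; simp only
      have heq : (n : ℝ) * D / n = D := by field_simp
      rw [heq, hD, hfT]
    have hg0 : g 0 = a := by rw [hg]; simp [hf0]
    have hn0 : 0 < n := by exact_mod_cast hnR
    refine ⟨((List.range n).map g), ?_, ?_, ?_, ?_⟩
    · simp; omega
    · have heq : (List.range n).map g ++ [b] = (List.range (n+1)).map g := by
        rw [List.range_succ, List.map_append, List.map_singleton, hgn]
      rw [heq, head?_map_range, hg0]
    · have heq : (List.range n).map g ++ [b] = (List.range (n+1)).map g := by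
        rw [List.range_succ, List.map_append, List.map_singleton, hgn]
      rw [heq]; change List.IsChain _ _; rw [List.isChain_map]
      exact (List.isChain_range_succ (fun i j => stepCost H (g i) (g j) ≤ 1) n).2
        (fun m hm => hunit m hm)
    · have heq : (List.range n).map g ++ [b] = (List.range (n+1)).map g := by
        rw [List.range_succ, List.map_append, List.map_singleton, hgn]
      rw [heq, hd]
      exact hcost

/-- normalisation: every chain refines to a chain with unit steps and no larger cost. -/
lemma exists_norm (hG : GeodesicSpace X) :
    ∀ (l : List X) (x y : X), IsCh x y l →
    ∃ l' : List X, IsCh x y l' ∧ List.Chain' (fun u v => stepCost H u v ≤ 1) l' ∧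
      cCost H l' ≤ cCost H l := by
  intro l
  induction l with
  | nil => intro x y h; exact absurd rfl h.1
  | cons a t ih =>
    intro x y h
    have hax : a = x := by have := h.2.1; simpa using this
    subst hax
    cases t with
    | nil =>
      have hay : a = y := by have := h.2.2; simpa using this
      exact ⟨[a], ⟨by simp, rfl, by simp [hay]⟩, List.isChain_singleton a, by simp⟩
    | cons b t' =>
      have hch' : IsCh b y (b :: t') := ⟨by simp, rfl, by have := h.2.2; simpa using this⟩
      obtain ⟨l'', hch'', hun'', hco''⟩ := ih b y hch'
      obtain ⟨m₀, hm₀ne, hmh, hmc, hmcost⟩ := exists_unit_chain H hG a b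
      obtain ⟨t'', rfl⟩ : ∃ t'', l'' = b :: t'' := by
        cases l'' with
        | nil => exact absurd rfl hch''.1
        | cons c u =>
          have : c = b := by have := hch''.2.1; simpa using this
          exact ⟨u, by rw [this]⟩
      refine ⟨m₀ ++ b :: t'', ⟨by simp [hm₀ne], ?_, ?_⟩, ?_, ?_⟩
      · rw [List.head?_append]
        rw [List.head?_append] at hmh
        rcases Option.or_eq_some_iff.1 hmh with h' | ⟨h', -⟩
        · rw [h']; rfl
        · rw [List.head?_eq_none_iff] at h'; exact absurd h' hm₀ne
      · rw [List.getLast?_append]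
        have := hch''.2.2
        rw [this]; rfl
      · change List.IsChain _ _; rw [List.isChain_append]
        have hsplit := List.isChain_append.1 hmc
        refine ⟨hsplit.1, hun'', ?_⟩
        intro p hp q hq
        have := hsplit.2.2 p hp 
        simp only [List.head?_cons, Option.mem_def, Option.some.injEq] at hq
        subst hq
        exact this b rfl
      · rw [cCost_append_cons]
        have : cCost H (a :: b :: t') = stepCost H a b + cCost H (b :: t') :=
          cCost_cons_cons H a b t'
        rw [this]
        have h2 : cCost H (m₀ ++ [b]) ≤ stepCost H a b := hmcost
        linarith

lemma exists_good_chain (hG : GeodesicSpace X) (x y : X) :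
    ∃ l : List X, IsCh x y l ∧ List.Chain' (fun u v => stepCost H u v ≤ 1) l ∧
      cCost H l ≤ elecDist H x y + 1 := by
  obtain ⟨l, hch, hcost⟩ := exists_chain_lt H x y one_pos
  obtain ⟨l', hch', hun', hco'⟩ := exists_norm H hG l x y hch
  exact ⟨l', hch', hun', by linarith⟩

end ES

set_option linter.unusedSectionVars false
set_option linter.unusedVariables false
set_option maxHeartbeats 1000000
open Metric Set

namespace ES
variable {X : Type} [MetricSpace X] (H : Set (Set X))

lemma cCost_len_le_one {l : List X} (h : l.length ≤ 1) : cCost H l = 0 := by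
  cases l with
  | nil => rfl
  | cons a t =>
    cases t with
    | nil => rfl
    | cons b t' => simp at h

lemma exists_window (l : List X) (hlen : 2 ≤ l.length)
    (h1 : List.Chain' (fun a b => stepCost H a b ≤ 1) l) :
    ∃ i < l.length, cCost H (l.take (i+1)) ≤ cCost H l / 2 + 1/2 ∧
      cCost H (l.drop i) ≤ cCost H l / 2 + 1/2 := by
  set L := cCost H l with hL
  have hL0 : 0 ≤ L := cCost_nonneg H l
  set P : ℕ → Prop := fun i => cCost H (l.take (i+1)) ≤ L / 2 + 1/2 with hP
  letI instP : DecidablePred P := fun _ => Classical.propDecidable _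
  have hP0 : P 0 := by
    have h0 : cCost H (l.take 1) = 0 := cCost_len_le_one H (by simp)
    rw [hP]; simp only [h0]; linarith
  set i₀ := Nat.findGreatest P (l.length - 1) with hi₀def
  have hPi : P i₀ := Nat.findGreatest_spec (Nat.zero_le _) hP0
  have hi₀le : i₀ ≤ l.length - 1 := Nat.findGreatest_le _
  have hi₀lt : i₀ < l.length := by omega
  by_cases hend : i₀ = l.length - 1
  · refine ⟨i₀, hi₀lt, hPi, ?_⟩
    have : cCost H (l.drop i₀) = 0 := by
      apply cCost_len_le_one
      rw [List.length_drop]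
      omega
    rw [this]; linarith
  · have hfail : ¬ P (i₀ + 1) :=
      @Nat.findGreatest_is_greatest (i₀+1) P instP (l.length - 1)
        (by rw [← hi₀def]; omega) (by omega)
    have hii : i₀ + 1 < l.length := by omega
    have hsplit : L = cCost H (l.take (i₀+2)) + cCost H (l.drop (i₀+1)) :=
      cCost_take_drop H l (i₀+1) hii
    have hbig : cCost H (l.take (i₀+2)) > L / 2 + 1/2 := by
      have : ¬ cCost H (l.take (i₀+1+1)) ≤ L / 2 + 1/2 := hfail
      push_neg at this
      simpa [show i₀+1+1 = i₀+2 by omega] using this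
    have hstep : stepCost H (l[i₀]) (l[i₀+1]) ≤ 1 := by
      have := List.isChain_iff_getElem.1 h1 i₀ (by omega)
      simpa using this
    have e1 : l.drop i₀ = l[i₀] :: l.drop (i₀+1) := List.drop_eq_getElem_cons hi₀lt
    have e2 : l.drop (i₀+1) = l[i₀+1] :: l.drop (i₀+2) := List.drop_eq_getElem_cons hii
    have hcd : cCost H (l.drop i₀) = stepCost H (l[i₀]) (l[i₀+1]) + cCost H (l.drop (i₀+1)) := by
      rw [e1, e2, cCost_cons_cons, ← e2]
    refine ⟨i₀, hi₀lt, hPi, ?_⟩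
    rw [hcd]
    linarith

/-- the logarithmic tracking lemma: points of a geodesic are electrically close to any
chain between its endpoints, up to a logarithmic error in the cost. -/
lemma K4 {δ C : ℝ} (hδ0 : 0 ≤ δ) (hC0 : 0 ≤ C)
    (h4 : GromovHyperbolicWith (fun a b : X => dist a b) δ) (hG : GeodesicSpace X)
    (hqc : ∀ A ∈ H, QuasiconvexSet C A) :
    ∀ (k : ℕ) (l : List X) (x y : X), IsCh x y l →
      List.Chain' (fun u v => stepCost H u v ≤ 1) l → cCost H l ≤ 2^k / 2 + 1 →
      ∀ f : ℝ → X, IsGeodesicSegment f 0 (dist x y) → f 0 = x → f (dist x y) = y →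
      ∀ s ∈ Icc (0:ℝ) (dist x y), ∃ c ∈ l, elecDist H (f s) c ≤ 6*δ + C + 2 + 3*δ*k := by
  intro k
  induction k with
  | zero =>
    intro l x y hch h1 hcost f hf hf0 hfT s hs
    have hcost32 : cCost H l ≤ 3/2 := by norm_num at hcost; linarith
    rcases chain_structure H hch h1 with hshort | h2 | ⟨A, hAH, a, hal, b, hbl, haA, hbA, hj⟩
    · refine ⟨x, head_mem_of_isCh hch, ?_⟩
      have h1' : elecDist H (f s) x ≤ dist (f s) x := elecDist_le_dist H _ _
      have h2' : dist (f s) x = s := by rw [dist_comm]; exact dist_left hf hf0 hs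
      have : s ≤ dist x y := hs.2
      simp only [Nat.cast_zero]
      linarith
    · exfalso; linarith
    · have hxa : dist x a ≤ 1/2 := by
        have := dist_nonneg (x := b) (y := y); linarith
      have hby : dist b y ≤ 1/2 := by
        have := dist_nonneg (x := x) (y := a); linarith
      obtain ⟨g1, hg10, hg1T, hg1⟩ := hG x b
      obtain ⟨g3, hg30, hg3T, hg3⟩ := hG b y
      obtain ⟨g4, hg40, hg4T, hg4⟩ := hG x a
      obtain ⟨g2, hg20, hg2T, hg2⟩ := hG a b
      rcases slim hδ0 h4 hf hf0 hfT hg1 hg10 hg1T hg3 hg30 hg3T hs with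
        ⟨t, ht, hd⟩ | ⟨t, ht, hd⟩
      · -- f s close to [x, b]; split the triangle (x, a, b)
        rcases slim hδ0 h4 hg1 hg10 hg1T hg4 hg40 hg4T hg2 hg20 hg2T ht with
          ⟨t', ht', hd'⟩ | ⟨t', ht', hd'⟩
        · -- close to [x, a]
          refine ⟨x, head_mem_of_isCh hch, ?_⟩
          have hxgt : dist x (g4 t') = t' := dist_left hg4 hg40 ht'
          have : elecDist H (f s) x ≤ dist (f s) (g1 t) + dist (g1 t) (g4 t') + dist (g4 t') x := by
            calc elecDist H (f s) x ≤ elecDist H (f s) (g4 t') + elecDist H (g4 t') x :=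
                  elecDist_triangle H _ _ _
              _ ≤ (elecDist H (f s) (g1 t) + elecDist H (g1 t) (g4 t')) + elecDist H (g4 t') x := by
                  linarith [elecDist_triangle H (f s) (g1 t) (g4 t')]
              _ ≤ dist (f s) (g1 t) + dist (g1 t) (g4 t') + dist (g4 t') x := by
                  linarith [elecDist_le_dist H (f s) (g1 t), elecDist_le_dist H (g1 t) (g4 t'),
                    elecDist_le_dist H (g4 t') x]
          have hd4 : dist (g4 t') x ≤ 1/2 := by
            rw [dist_comm (g4 t') x, hxgt]
            linarith [ht'.2, hxa]
          simp only [Nat.cast_zero]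
          linarith
        · -- close to [a, b] : electrically close to a
          refine ⟨a, hal, ?_⟩
          have hqc' := qc_bound H hqc hAH haA hbA hg2 hg20 hg2T ht'
          have : elecDist H (f s) a ≤ dist (f s) (g1 t) + dist (g1 t) (g2 t') + elecDist H (g2 t') a := by
            calc elecDist H (f s) a ≤ elecDist H (f s) (g2 t') + elecDist H (g2 t') a :=
                  elecDist_triangle H _ _ _
              _ ≤ (elecDist H (f s) (g1 t) + elecDist H (g1 t) (g2 t')) + elecDist H (g2 t') a := by
                  linarith [elecDist_triangle H (f s) (g1 t) (g2 t')]
              _ ≤ dist (f s) (g1 t) + dist (g1 t) (g2 t') + elecDist H (g2 t') a := by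
                  linarith [elecDist_le_dist H (f s) (g1 t), elecDist_le_dist H (g1 t) (g2 t')]
          simp only [Nat.cast_zero]
          linarith [hqc'.1]
      · -- f s close to [b, y]
        refine ⟨b, hbl, ?_⟩
        have hbgt : dist b (g3 t) = t := dist_left hg3 hg30 ht
        have : elecDist H (f s) b ≤ dist (f s) (g3 t) + dist (g3 t) b := by
          calc elecDist H (f s) b ≤ elecDist H (f s) (g3 t) + elecDist H (g3 t) b :=
                elecDist_triangle H _ _ _
            _ ≤ dist (f s) (g3 t) + dist (g3 t) b := by
                linarith [elecDist_le_dist H (f s) (g3 t), elecDist_le_dist H (g3 t) b]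
        have : dist (g3 t) b ≤ 1/2 := by
          rw [dist_comm, hbgt]
          calc t ≤ dist b y := ht.2
            _ ≤ 1/2 := hby
        simp only [Nat.cast_zero]
        linarith [elecDist_triangle H (f s) (g3 t) b,
          elecDist_le_dist H (f s) (g3 t), elecDist_le_dist H (g3 t) b]
  | succ k ih =>
    intro l x y hch h1 hcost f hf hf0 hfT s hs
    by_cases hsmall : cCost H l ≤ 2^k / 2 + 1
    · obtain ⟨c, hc, hb⟩ := ih l x y hch h1 hsmall f hf hf0 hfT s hs
      refine ⟨c, hc, ?_⟩
      have : (3:ℝ)*δ*k ≤ 3*δ*(k+1 : ℕ) := by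
        push_cast
        nlinarith
      linarith
    · push_neg at hsmall
      have h2k : (1:ℝ) ≤ 2^k := one_le_pow₀ (by norm_num)
      have hlen : 2 ≤ l.length := by
        by_contra hc
        push_neg at hc
        have := cCost_len_le_one H (show l.length ≤ 1 by omega)
        rw [this] at hsmall
        linarith
      obtain ⟨i, hi, hleft, hright⟩ := exists_window H l hlen h1
      set z := l[i] with hz
      have hchL : IsCh x z (l.take (i+1)) := IsCh_take hch i hi
      have hchR : IsCh z y (l.drop i) := IsCh_drop hch i hi
      have hcostL : cCost H (l.take (i+1)) ≤ 2^k / 2 + 1 := by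
        rw [pow_succ] at hcost
        linarith
      have hcostR : cCost H (l.drop i) ≤ 2^k / 2 + 1 := by
        rw [pow_succ] at hcost
        linarith
      obtain ⟨gl, hgl0, hglT, hgl⟩ := hG x z
      obtain ⟨gr, hgr0, hgrT, hgr⟩ := hG z y
      rcases slim hδ0 h4 hf hf0 hfT hgl hgl0 hglT hgr hgr0 hgrT hs with
        ⟨t, ht, hd⟩ | ⟨t, ht, hd⟩
      · obtain ⟨c, hcmem, hcb⟩ := ih (l.take (i+1)) x z hchL (h1.take _) hcostL
          gl hgl hgl0 hglT t ht
        refine ⟨c, (List.take_sublist _ _).mem hcmem, ?_⟩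
        have htr : elecDist H (f s) c ≤ dist (f s) (gl t) + elecDist H (gl t) c := by
          linarith [elecDist_triangle H (f s) (gl t) c, elecDist_le_dist H (f s) (gl t)]
        have : (3:ℝ)*δ*(k+1:ℕ) = 3*δ*k + 3*δ := by push_cast; ring
        rw [this]
        linarith
      · obtain ⟨c, hcmem, hcb⟩ := ih (l.drop i) z y hchR (h1.drop _) hcostR
          gr hgr hgr0 hgrT t ht
        refine ⟨c, (List.drop_sublist _ _).mem hcmem, ?_⟩
        have htr : elecDist H (f s) c ≤ dist (f s) (gr t) + elecDist H (gr t) c := by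
          linarith [elecDist_triangle H (f s) (gr t) c, elecDist_le_dist H (f s) (gr t)]
        have : (3:ℝ)*δ*(k+1:ℕ) = 3*δ*k + 3*δ := by push_cast; ring
        rw [this]
        linarith

end ES

set_option linter.unusedSectionVars false
set_option linter.unusedVariables false
set_option maxHeartbeats 1000000
open Metric Set

namespace ES
variable {X : Type} [MetricSpace X] (H : Set (Set X))

lemma nat_le_sqrt (k : ℕ) : (k:ℝ) ≤ 3 * Real.sqrt (2^k) := by
  induction k with
  | zero =>
    simp only [Nat.cast_zero, pow_zero, Real.sqrt_one]
    norm_num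
  | succ k ih =>
    have h2 : (1.4:ℝ) ≤ Real.sqrt 2 := by
      rw [Real.le_sqrt (by norm_num) (by norm_num)]
      norm_num
    have h1 : (1:ℝ) ≤ Real.sqrt (2^k) := Real.one_le_sqrt.2 (one_le_pow₀ (by norm_num))
    have hs : Real.sqrt (2^(k+1)) = Real.sqrt (2^k) * Real.sqrt 2 := by
      rw [pow_succ, Real.sqrt_mul (by positivity)]
    rw [hs]
    push_cast
    nlinarith [Real.sqrt_nonneg ((2:ℝ)^k)]

/-- the bootstrapping arithmetic: the electric radius `ρ` cannot satisfy the logarithmic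
bound if it exceeds `ρ₀`. -/
lemma rho_arith {δ C ρ : ℝ} (hδ0 : 0 ≤ δ) (hC0 : 0 ≤ C)
    (hρ : (51*δ + C + 12)^2 < ρ)
    {k : ℕ} (hkmin : ∀ j : ℕ, j < k → (2:ℝ)^j < 8*ρ)
    (hub : ρ ≤ 15*δ + C + 2 + 3*δ*k) : False := by
  set W : ℝ := 51*δ + C + 12 with hW
  have hW12 : 12 ≤ W := by rw [hW]; linarith
  have hW0 : 0 ≤ W := by linarith
  have hρ0 : 0 ≤ ρ := le_trans (by positivity) (le_of_lt hρ)
  set s := Real.sqrt ρ with hsdef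
  have hs2 : s^2 = ρ := Real.sq_sqrt hρ0
  have hsW : W ≤ s := by
    rw [hsdef, Real.le_sqrt hW0 hρ0]
    linarith
  have hs1 : (1:ℝ) ≤ s := by linarith
  cases k with
  | zero =>
    simp only [Nat.cast_zero, mul_zero, add_zero] at hub
    nlinarith
  | succ j =>
    have hj : (2:ℝ)^j < 8*ρ := hkmin j (Nat.lt_succ_self j)
    have hjle : (j:ℝ) ≤ 9 * s := by
      have h1 : (j:ℝ) ≤ 3 * Real.sqrt (2^j) := nat_le_sqrt j
      have h2 : Real.sqrt (2^j) ≤ Real.sqrt (8*ρ) := Real.sqrt_le_sqrt (le_of_lt hj)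
      have h3 : Real.sqrt (8*ρ) = Real.sqrt 8 * s := by
        rw [hsdef, Real.sqrt_mul (by norm_num)]
      have h4 : Real.sqrt 8 ≤ 3 := by
        have : Real.sqrt 8 ≤ Real.sqrt 9 := Real.sqrt_le_sqrt (by norm_num)
        have h9 : Real.sqrt 9 = 3 := by
          rw [show (9:ℝ) = 3^2 by norm_num, Real.sqrt_sq (by norm_num)]
        linarith
      have hs0 : 0 ≤ s := Real.sqrt_nonneg ρ
      nlinarith
    have hk9 : ((j+1 : ℕ):ℝ) ≤ 9*s + 1 := by push_cast; linarith
    have hub' : ρ ≤ 15*δ + C + 2 + 3*δ*(9*s+1) := by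
      have h3δ : 0 ≤ 3*δ := by linarith
      have := hub
      push_cast at this
      nlinarith
    nlinarith

/-- subchains of near-optimal chains are near-optimal between their endpoints. -/
lemma cCost_infix_le {x y : X} {σ τ : List X} (hch : IsCh x y σ)
    (hcost : cCost H σ ≤ elecDist H x y + 1)
    (hinf : τ <:+: σ) (hne : τ ≠ []) {u v : X}
    (hu : τ.head? = some u) (hv : τ.getLast? = some v) :
    cCost H τ ≤ elecDist H u v + 1 := by
  obtain ⟨s, t, rfl⟩ := hinf
  obtain ⟨τ', rfl⟩ : ∃ τ', τ = u :: τ' := by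
    cases τ with
    | nil => exact absurd rfl hne
    | cons a t' =>
      have : a = u := by simpa using hu
      exact ⟨t', by rw [this]⟩
  have hτv : (u :: τ').getLast (by simp) = v := by
    rw [List.getLast?_eq_getLast (by simp)] at hv
    exact Option.some_injective _ hv
  have hs1 : cCost H (s ++ (u :: τ') ++ t) =
      cCost H (s ++ [u]) + cCost H ((u :: τ') ++ t) := by
    rw [List.append_assoc, List.cons_append, cCost_append_cons H s u (τ' ++ t),
      ← List.cons_append]
  have hdl : (u :: τ').dropLast ++ [v] = u :: τ' := by
    conv_rhs => rw [← List.dropLast_append_getLast (show u::τ' ≠ [] by simp), hτv]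
  have hs2 : cCost H ((u :: τ') ++ t) = cCost H (u :: τ') + cCost H (v :: t) := by
    calc cCost H ((u :: τ') ++ t)
        = cCost H (((u :: τ').dropLast ++ [v]) ++ t) := by rw [hdl]
      _ = cCost H ((u :: τ').dropLast ++ (v :: t)) := by
            rw [List.append_assoc, List.singleton_append]
      _ = cCost H ((u :: τ').dropLast ++ [v]) + cCost H (v :: t) := cCost_append_cons H _ v t
      _ = cCost H (u :: τ') + cCost H (v :: t) := by rw [hdl]
  have hbound1 : elecDist H x u ≤ cCost H (s ++ [u]) := by
    cases s with
    | nil =>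
      have hxu : u = x := by simpa using hch.2.1
      rw [← hxu, elecDist_self]
      exact cCost_nonneg H _
    | cons a s' =>
      apply elecDist_le_cCost
      have hax : a = x := by simpa using hch.2.1
      refine ⟨by simp, by simp [hax], ?_⟩
      rw [show (a :: s') ++ [u] = (a :: s') ++ [u] from rfl, List.getLast?_concat]
  have hbound2 : elecDist H v y ≤ cCost H (v :: t) := by
    cases t with
    | nil =>
      have hvy : v = y := by
        have h2 := hch.2.2
        rw [List.append_nil, List.getLast?_append, hv] at h2
        simpa using h2
      rw [hvy, elecDist_self]
      exact cCost_nonneg H _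
    | cons b t' =>
      apply elecDist_le_cCost
      refine ⟨by simp, rfl, ?_⟩
      have h2 := hch.2.2
      rw [List.getLast?_append] at h2
      have h3 : (b :: t').getLast? = some y := by
        rcases Option.or_eq_some_iff.1 h2 with h' | ⟨h', -⟩
        · exact h'
        · simp at h'
      rw [List.getLast?_cons_cons]
      exact h3
  have htri : elecDist H x y ≤ elecDist H x u + elecDist H u v + elecDist H v y := by
    have t1 := elecDist_triangle H x u y
    have t2 := elecDist_triangle H u v y
    linarith
  rw [hs1, hs2] at hcost
  linarith

lemma chain_of_infix {σ τ : List X} (h1 : List.Chain' (fun u v => stepCost H u v ≤ 1) σ)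
    (hinf : τ <:+: σ) : List.Chain' (fun u v => stepCost H u v ≤ 1) τ :=
  h1.infix hinf

lemma isCh_getElem_zero {u v : X} {τ : List X} (h : IsCh u v τ) (hpos : 0 < τ.length) :
    τ[0] = u := by
  have := h.2.1
  rw [List.head?_eq_head h.1] at this
  rw [List.getElem_zero hpos]
  exact Option.some_injective _ this

lemma isCh_getElem_last {u v : X} {τ : List X} (h : IsCh u v τ) :
    τ[τ.length - 1]'(by have := List.length_pos_iff.2 h.1; omega) = v := by
  have := h.2.2
  rw [List.getLast?_eq_getLast h.1] at this
  rw [← List.getLast_eq_getElem h.1]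
  exact Option.some_injective _ this

end ES

set_option linter.unusedSectionVars false
set_option linter.unusedVariables false
set_option maxHeartbeats 4000000
open Metric Set

namespace ES
variable {X : Type} [MetricSpace X] (H : Set (Set X))

/-- The bootstrap: points of a geodesic between the endpoints of a subchain of a
near-optimal chain are uniformly electrically close to the subchain. -/
lemma boot {δ C : ℝ} (hδ0 : 0 ≤ δ) (hC0 : 0 ≤ C)
    (h4 : GromovHyperbolicWith (fun a b : X => dist a b) δ) (hG : GeodesicSpace X)
    (hqc : ∀ A ∈ H, QuasiconvexSet C A) (σ : List X) (x y : X) (hσch : IsCh x y σ)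
    (hσ1 : List.Chain' (fun u v => stepCost H u v ≤ 1) σ)
    (hσcost : cCost H σ ≤ elecDist H x y + 1) :
    ∀ (m : ℕ) (τ : List X), τ <:+: σ → τ ≠ [] → τ.length ≤ m + 1 →
      ∀ u v : X, τ.head? = some u → τ.getLast? = some v →
      ∀ f : ℝ → X, IsGeodesicSegment f 0 (dist u v) → f 0 = u → f (dist u v) = v →
      ∀ s ∈ Icc (0:ℝ) (dist u v),
      ∃ c ∈ τ, elecDist H (f s) c ≤ (51*δ + C + 12)^2 := by
  intro m
  induction m with
  | zero =>
    intro τ hinf hτne hτlen u v hu hv f hf hf0 hfT s hs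
    obtain ⟨a, rfl⟩ := List.length_eq_one_iff.1
      (le_antisymm hτlen (List.length_pos_iff.2 hτne))
    have hua : a = u := by simpa using hu
    have hva : a = v := by simpa using hv
    have hdist0 : dist u v = 0 := by rw [← hua, ← hva, dist_self]
    have hs0 : s = 0 := by
      rcases hs with ⟨h1, h2⟩
      rw [hdist0] at h2
      linarith
    refine ⟨a, by simp, ?_⟩
    rw [hs0, hf0, hua, elecDist_self]
    positivity
  | succ m ih =>
    intro τ hinf hτne hτlen u v hu hv f hf hf0 hfT s hs
    classical
    by_contra hcon
    push_neg at hcon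
    set q := f s with hqdef
    set ρ := minE H q τ with hρdef
    have hτch : IsCh u v τ := ⟨hτne, hu, hv⟩
    have hτ1 : List.Chain' (fun a b => stepCost H a b ≤ 1) τ := hσ1.infix hinf
    have hρmem : ∀ c ∈ τ, ρ ≤ elecDist H q c := fun c hc => minE_le H q hc
    have hρgt : (51*δ + C + 12)^2 < ρ := by
      obtain ⟨c₀, hc₀, he₀⟩ := exists_minE H q hτne
      rw [hρdef, he₀]
      exact hcon c₀ hc₀
    have hρ0 : 0 ≤ ρ := minE_nonneg H q τ
    have hbig : 10*δ + C + 10 ≤ (51*δ + C + 12)^2 := by nlinarith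
    have hn1 : 1 ≤ τ.length := List.length_pos_iff.2 hτne
    have hnm : τ.length ≤ m + 2 := hτlen
    -- the first and last indices within 2ρ of q
    have hPex : ∃ i, ∃ h : i < τ.length, elecDist H q τ[i] ≤ 2*ρ := by
      obtain ⟨c₀, hc₀, he₀⟩ := exists_minE H q hτne
      obtain ⟨i, hi, hie⟩ := List.mem_iff_getElem.1 hc₀
      exact ⟨i, hi, by rw [hie, ← he₀, ← hρdef]; linarith⟩
    set p₁ := Nat.find hPex with hp₁def
    obtain ⟨hp₁lt, hp₁e⟩ := Nat.find_spec hPex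
    have hp₁min : ∀ j, j < p₁ → ∀ (hj : j < τ.length), 2*ρ < elecDist H q τ[j] := by
      intro j hjp hj
      have hnp := Nat.find_min hPex hjp
      push_neg at hnp
      exact hnp hj
    set p₂ := Nat.findGreatest (fun i => ∃ h : i < τ.length, elecDist H q τ[i] ≤ 2*ρ)
      (τ.length - 1) with hp₂def
    have hPp₂ : ∃ h : p₂ < τ.length, elecDist H q τ[p₂] ≤ 2*ρ := by
      have h := Nat.findGreatest_spec
        (P := fun i => ∃ h : i < τ.length, elecDist H q τ[i] ≤ 2 * ρ)
        (m := p₁) (n := τ.length - 1) (by omega) (Nat.find_spec hPex)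
      rw [← hp₂def] at h
      exact h
    obtain ⟨hp₂lt, hp₂e⟩ := hPp₂
    have hp₁p₂ : p₁ ≤ p₂ := by
      have h := Nat.le_findGreatest
        (P := fun i => ∃ h : i < τ.length, elecDist H q τ[i] ≤ 2 * ρ)
        (m := p₁) (n := τ.length - 1) (by omega) (Nat.find_spec hPex)
      rw [← hp₂def] at h
      exact h
    have hp₂max : ∀ j, p₂ < j → ∀ (hj : j < τ.length), 2*ρ < elecDist H q τ[j] := by
      intro j hjgt hj
      have hnp := Nat.findGreatest_is_greatest
        (P := fun i => ∃ h : i < τ.length, elecDist H q τ[i] ≤ 2 * ρ)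
        (k := j) (n := τ.length - 1) (by rw [← hp₂def]; exact hjgt)
        (show j ≤ τ.length - 1 by omega)
      simp only [not_exists, not_le] at hnp
      exact hnp hj
    set a' := τ[p₁] with ha'def
    set b' := τ[p₂] with hb'def
    have ha'mem : a' ∈ τ := by rw [ha'def]; exact List.getElem_mem _
    have hb'mem : b' ∈ τ := by rw [hb'def]; exact List.getElem_mem _
    obtain ⟨g1, hg10, hg1T, hg1⟩ := hG u b'
    obtain ⟨g2, hg20, hg2T, hg2⟩ := hG b' v
    rcases slim hδ0 h4 hf hf0 hfT hg1 hg10 hg1T hg2 hg20 hg2T hs with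
      ⟨t, ht, hd⟩ | ⟨t, ht, hd⟩
    · -- q is 3δ-close to the geodesic [u, b']
      obtain ⟨g3, hg30, hg3T, hg3⟩ := hG u a'
      obtain ⟨g4, hg40, hg4T, hg4⟩ := hG a' b'
      rcases slim hδ0 h4 hg1 hg10 hg1T hg3 hg30 hg3T hg4 hg40 hg4T ht with
        ⟨t2, ht2, hd2⟩ | ⟨t2, ht2, hd2⟩
      · -- close to [u, a']
        by_cases hp₁0 : p₁ = 0
        · -- a' = u ; direct contradiction
          have hau : a' = u := by
            rw [ha'def]
            have := isCh_getElem_zero hτch (by omega)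
            simpa [hp₁0] using this
          have hdua : dist u a' = 0 := by rw [hau, dist_self]
          have ht20 : t2 = 0 := by
            rcases ht2 with ⟨h1', h2'⟩
            rw [hdua] at h2'
            linarith
          have hg3u : g3 t2 = u := by rw [ht20, hg30]
          have hequ : elecDist H q u ≤ 6*δ := by
            calc elecDist H q u ≤ elecDist H q (g1 t) + elecDist H (g1 t) u :=
                  elecDist_triangle H _ _ _
              _ ≤ dist q (g1 t) + dist (g1 t) u := by
                  linarith [elecDist_le_dist H q (g1 t), elecDist_le_dist H (g1 t) u]
              _ ≤ 6*δ := by rw [← hg3u]; linarith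
          have := hρmem u (head_mem_of_isCh hτch)
          linarith
        · -- p₁ ≥ 1 : consider the predecessor c
          have hp₁1 : 1 ≤ p₁ := by omega
          set c := τ[p₁ - 1]'(by omega) with hcdef
          obtain ⟨g5, hg50, hg5T, hg5⟩ := hG u c
          obtain ⟨g6, hg60, hg6T, hg6⟩ := hG c a'
          rcases slim hδ0 h4 hg3 hg30 hg3T hg5 hg50 hg5T hg6 hg60 hg6T ht2 with
            ⟨t3, ht3, hd3⟩ | ⟨t3, ht3, hd3⟩
          · -- close to [u, c] : recursion on the prefix
            have hqd : dist q (g5 t3) ≤ 9*δ :=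
              calc dist q (g5 t3) ≤ dist q (g1 t) + dist (g1 t) (g3 t2) + dist (g3 t2) (g5 t3) :=
                    dist_triangle4 q (g1 t) (g3 t2) (g5 t3)
                _ ≤ 9*δ := by linarith
            have htakeL := IsCh_take hτch (p₁ - 1) (by omega)
            have hLinf : τ.take (p₁ - 1 + 1) <:+: σ :=
              ((List.take_prefix (p₁ - 1 + 1) τ).isInfix).trans hinf
            have hLne : τ.take (p₁ - 1 + 1) ≠ [] :=
              List.ne_nil_of_length_pos (by rw [List.length_take]; omega)
            have hLlen : (τ.take (p₁ - 1 + 1)).length ≤ m + 1 := by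
              rw [List.length_take]; omega
            obtain ⟨cc, hccmem, hccb⟩ := ih (τ.take (p₁ - 1 + 1)) hLinf hLne hLlen u c
              htakeL.2.1 htakeL.2.2 g5 hg5 hg50 hg5T t3 ht3
            obtain ⟨j, hj, hje⟩ := List.mem_iff_getElem.1 hccmem
            have hjlen : j < p₁ := by
              have := hj; rw [List.length_take] at this; omega
            have hjτ : j < τ.length := by omega
            have hgete : (τ.take (p₁ - 1 + 1))[j] = τ[j] := List.getElem_take
            have h2ρ : 2*ρ < elecDist H q cc := by
              rw [← hje, hgete]
              exact hp₁min j hjlen hjτ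
            have : elecDist H q cc ≤ 9*δ + (51*δ + C + 12)^2 := by
              calc elecDist H q cc ≤ elecDist H q (g5 t3) + elecDist H (g5 t3) cc :=
                    elecDist_triangle H _ _ _
                _ ≤ dist q (g5 t3) + elecDist H (g5 t3) cc := by
                    linarith [elecDist_le_dist H q (g5 t3)]
                _ ≤ 9*δ + (51*δ + C + 12)^2 := by linarith
            linarith
          · -- close to the step [c, a'] : contradiction
            have hqd : dist q (g6 t3) ≤ 9*δ :=
              calc dist q (g6 t3) ≤ dist q (g1 t) + dist (g1 t) (g3 t2) + dist (g3 t2) (g6 t3) :=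
                    dist_triangle4 q (g1 t) (g3 t2) (g6 t3)
                _ ≤ 9*δ := by linarith
            have hstep : stepCost H c a' ≤ 1 := by
              have hgg := List.isChain_iff_getElem.1 hτ1 (p₁ - 1) (by omega)
              have hpp : p₁ - 1 + 1 = p₁ := by omega
              simp only [List.get_eq_getElem, hpp] at hgg
              exact hgg
            have h2ρc : 2*ρ < elecDist H q c := hp₁min (p₁-1) (by omega) (by omega)
            rcases stepCost_cases H c a' with hcd | ⟨-, A, hAH, hcA, haA⟩
            · -- plain step of length ≤ 1
              have hdca : dist c a' ≤ 1 := by rw [← hcd]; exact hstep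
              have hdc : dist c (g6 t3) = t3 := dist_left hg6 hg60 ht3
              have : elecDist H q c ≤ 9*δ + 1 := by
                calc elecDist H q c ≤ elecDist H q (g6 t3) + elecDist H (g6 t3) c :=
                      elecDist_triangle H _ _ _
                  _ ≤ dist q (g6 t3) + dist (g6 t3) c := by
                      linarith [elecDist_le_dist H q (g6 t3), elecDist_le_dist H (g6 t3) c]
                  _ ≤ 9*δ + 1 := by
                      rw [dist_comm (g6 t3) c, hdc]
                      have := ht3.2
                      linarith
              linarith
            · -- electric jump : use quasiconvexity
              have hqcb := qc_bound H hqc hAH hcA haA hg6 hg60 hg6T ht3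
              have : elecDist H q c ≤ 9*δ + (C + 1) := by
                calc elecDist H q c ≤ elecDist H q (g6 t3) + elecDist H (g6 t3) c :=
                      elecDist_triangle H _ _ _
                  _ ≤ dist q (g6 t3) + elecDist H (g6 t3) c := by
                      linarith [elecDist_le_dist H q (g6 t3)]
                  _ ≤ 9*δ + (C + 1) := by linarith [hqcb.1]
              linarith
      · -- close to the middle geodesic [a', b'] : use the logarithmic lemma
        have hqd : dist q (g4 t2) ≤ 6*δ :=
          calc dist q (g4 t2) ≤ dist q (g1 t) + dist (g1 t) (g4 t2) := dist_triangle _ _ _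
            _ ≤ 6*δ := by linarith
        set τM := (τ.take (p₂+1)).drop p₁ with hτMdef
        have htake := IsCh_take hτch p₂ hp₂lt
        have hMinf : τM <:+: σ :=
          (List.drop_suffix p₁ (τ.take (p₂+1))).isInfix.trans
            ((List.take_prefix (p₂+1) τ).isInfix.trans hinf)
        have hlentake : (τ.take (p₂+1)).length = p₂ + 1 := by
          rw [List.length_take]; omega
        have hMne : τM ≠ [] := by
          apply List.ne_nil_of_length_pos
          rw [hτMdef, List.length_drop, hlentake]
          omega
        have hMhead : τM.head? = some a' := by
          rw [hτMdef, List.head?_drop]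
          have hlt : p₁ < (τ.take (p₂+1)).length := by rw [hlentake]; omega
          rw [List.getElem?_eq_getElem hlt, List.getElem_take]
        have hMlast : τM.getLast? = some b' := by
          rw [List.getLast?_eq_getLast hMne]
          have h1 := List.getLast_drop (i := p₁) (l := τ.take (p₂+1)) hMne
          rw [h1, ← List.getLast?_eq_getLast]
          exact htake.2.2
        have hMch : IsCh a' b' τM := ⟨hMne, hMhead, hMlast⟩
        have hMcost : cCost H τM ≤ elecDist H a' b' + 1 :=
          cCost_infix_le H hσch hσcost hMinf hMne hMhead hMlast
        have hab4ρ : elecDist H a' b' ≤ 4*ρ := by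
          calc elecDist H a' b' ≤ elecDist H a' q + elecDist H q b' := elecDist_triangle H _ _ _
            _ ≤ 2*ρ + 2*ρ := by
                rw [elecDist_symm H a' q]
                exact add_le_add hp₁e hp₂e
            _ = 4*ρ := by ring
        have hkex : ∃ k : ℕ, 8*ρ ≤ (2:ℝ)^k := by
          obtain ⟨k, hk⟩ := pow_unbounded_of_one_lt (8*ρ) (show (1:ℝ) < 2 by norm_num)
          exact ⟨k, le_of_lt hk⟩
        set k := Nat.find hkex with hkdef
        have hk8 : 8*ρ ≤ (2:ℝ)^k := Nat.find_spec hkex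
        have hkmin : ∀ j : ℕ, j < k → (2:ℝ)^j < 8*ρ := by
          intro j hj
          have := Nat.find_min hkex hj
          push_neg at this
          exact this
        have hMcost' : cCost H τM ≤ 2^k/2 + 1 := by linarith
        obtain ⟨cc, hccmem, hccb⟩ := K4 H hδ0 hC0 h4 hG hqc k τM a' b' hMch
          (hσ1.infix hMinf) hMcost' g4 hg4 hg40 hg4T t2 ht2
        have hccτ : cc ∈ τ := by
          have h1 : τM.Sublist τ :=
            (List.drop_sublist _ _).trans (List.take_sublist _ _)
          exact h1.mem hccmem
        have hub : ρ ≤ 15*δ + C + 2 + 3*δ*k := by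
          have h1 : ρ ≤ elecDist H q cc := hρmem cc hccτ
          have h2 : elecDist H q cc ≤ dist q (g4 t2) + elecDist H (g4 t2) cc := by
            linarith [elecDist_triangle H q (g4 t2) cc, elecDist_le_dist H q (g4 t2)]
          linarith
        exact rho_arith hδ0 hC0 hρgt hkmin hub
    · -- q is 3δ-close to the geodesic [b', v]
      by_cases hp₂end : p₂ = τ.length - 1
      · -- b' = v : direct contradiction
        have hbv : b' = v := by
          rw [hb'def]
          have := isCh_getElem_last hτch
          simp only [← hp₂end] at this
          exact this
        have hdbv : dist b' v = 0 := by rw [hbv, dist_self]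
        have ht0 : t = 0 := by
          rcases ht with ⟨h1', h2'⟩
          rw [hdbv] at h2'
          linarith
        have hg2b : g2 t = b' := by rw [ht0, hg20]
        have : elecDist H q b' ≤ 3*δ := by
          calc elecDist H q b' ≤ dist q b' := elecDist_le_dist H _ _
            _ = dist q (g2 t) := by rw [hg2b]
            _ ≤ 3*δ := hd
        have := hρmem b' hb'mem
        linarith
      · -- consider the successor c₂
        have hp₂1 : p₂ + 1 < τ.length := by omega
        set c₂ := τ[p₂ + 1] with hc₂def
        obtain ⟨g7, hg70, hg7T, hg7⟩ := hG b' c₂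
        obtain ⟨g8, hg80, hg8T, hg8⟩ := hG c₂ v
        rcases slim hδ0 h4 hg2 hg20 hg2T hg7 hg70 hg7T hg8 hg80 hg8T ht with
          ⟨t2, ht2, hd2⟩ | ⟨t2, ht2, hd2⟩
        · -- close to the step [b', c₂] : contradiction
          have hqd : dist q (g7 t2) ≤ 6*δ :=
            calc dist q (g7 t2) ≤ dist q (g2 t) + dist (g2 t) (g7 t2) := dist_triangle _ _ _
              _ ≤ 6*δ := by linarith
          have hstep : stepCost H b' c₂ ≤ 1 := by
            have hgg := List.isChain_iff_getElem.1 hτ1 p₂ (by omega)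
            exact hgg
          have h2ρc : 2*ρ < elecDist H q c₂ := hp₂max (p₂+1) (by omega) hp₂1
          rcases stepCost_cases H b' c₂ with hcd | ⟨-, A, hAH, hbA, hcA⟩
          · have hdbc : dist b' c₂ ≤ 1 := by rw [← hcd]; exact hstep
            have hdc : dist (g7 t2) c₂ = dist b' c₂ - t2 := dist_right hg7 hg7T ht2
            have : elecDist H q c₂ ≤ 6*δ + 1 := by
              calc elecDist H q c₂ ≤ elecDist H q (g7 t2) + elecDist H (g7 t2) c₂ :=
                    elecDist_triangle H _ _ _
                _ ≤ dist q (g7 t2) + dist (g7 t2) c₂ := by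
                    linarith [elecDist_le_dist H q (g7 t2), elecDist_le_dist H (g7 t2) c₂]
                _ ≤ 6*δ + 1 := by
                    rw [hdc]
                    have := ht2.1
                    linarith
            linarith
          · have hqcb := qc_bound H hqc hAH hbA hcA hg7 hg70 hg7T ht2
            have : elecDist H q c₂ ≤ 6*δ + (C + 1) := by
              calc elecDist H q c₂ ≤ elecDist H q (g7 t2) + elecDist H (g7 t2) c₂ :=
                    elecDist_triangle H _ _ _
                _ ≤ dist q (g7 t2) + elecDist H (g7 t2) c₂ := by
                    linarith [elecDist_le_dist H q (g7 t2)]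
                _ ≤ 6*δ + (C + 1) := by linarith [hqcb.2]
            linarith
        · -- close to [c₂, v] : recursion on the suffix
          have hqd : dist q (g8 t2) ≤ 6*δ :=
            calc dist q (g8 t2) ≤ dist q (g2 t) + dist (g2 t) (g8 t2) := dist_triangle _ _ _
              _ ≤ 6*δ := by linarith
          have hdropR := IsCh_drop hτch (p₂+1) hp₂1
          have hRinf : τ.drop (p₂+1) <:+: σ :=
            (τ.drop_suffix (p₂+1)).isInfix.trans hinf
          have hRne : τ.drop (p₂+1) ≠ [] :=
            List.ne_nil_of_length_pos (by rw [List.length_drop]; omega)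
          have hRlen : (τ.drop (p₂+1)).length ≤ m + 1 := by
            rw [List.length_drop]; omega
          obtain ⟨cc, hccmem, hccb⟩ := ih (τ.drop (p₂+1)) hRinf hRne hRlen c₂ v
            hdropR.2.1 hdropR.2.2 g8 hg8 hg80 hg8T t2 ht2
          obtain ⟨j, hj, hje⟩ := List.mem_iff_getElem.1 hccmem
          have hjτ : p₂ + 1 + j < τ.length := by
            have := hj; rw [List.length_drop] at this; omega
          have hgete : (τ.drop (p₂+1))[j] = τ[p₂+1+j] := List.getElem_drop
          have h2ρ : 2*ρ < elecDist H q cc := by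
            rw [← hje, hgete]
            exact hp₂max (p₂+1+j) (by omega) hjτ
          have : elecDist H q cc ≤ 6*δ + (51*δ + C + 12)^2 := by
            calc elecDist H q cc ≤ elecDist H q (g8 t2) + elecDist H (g8 t2) cc :=
                  elecDist_triangle H _ _ _
              _ ≤ dist q (g8 t2) + elecDist H (g8 t2) cc := by
                  linarith [elecDist_le_dist H q (g8 t2)]
              _ ≤ 6*δ + (51*δ + C + 12)^2 := by linarith
          linarith

end ES

set_option linter.unusedSectionVars false
set_option linter.unusedVariables false
set_option maxHeartbeats 4000000
open Metric Set

namespace ES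
variable {X : Type} [MetricSpace X] (H : Set (Set X))

/-- tracking: points of a geodesic are uniformly electrically close to any
near-optimal chain between its endpoints. -/
lemma track {δ C : ℝ} (hδ0 : 0 ≤ δ) (hC0 : 0 ≤ C)
    (h4 : GromovHyperbolicWith (fun a b : X => dist a b) δ) (hG : GeodesicSpace X)
    (hqc : ∀ A ∈ H, QuasiconvexSet C A) {u v : X} {σ : List X}
    (hch : IsCh u v σ) (h1 : List.Chain' (fun a b => stepCost H a b ≤ 1) σ)
    (hcost : cCost H σ ≤ elecDist H u v + 1)
    {f : ℝ → X} (hf : IsGeodesicSegment f 0 (dist u v)) (hf0 : f 0 = u)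
    (hfT : f (dist u v) = v) {s : ℝ} (hs : s ∈ Icc (0:ℝ) (dist u v)) :
    ∃ c ∈ σ, elecDist H (f s) c ≤ (51*δ + C + 12)^2 :=
  boot H hδ0 hC0 h4 hG hqc σ u v hch h1 hcost σ.length σ (List.infix_refl σ)
    hch.1 (by omega) u v hch.2.1 hch.2.2 f hf hf0 hfT s hs

/-- geodesics of `X` are electrically taut. -/
lemma taut {δ C : ℝ} (hδ0 : 0 ≤ δ) (hC0 : 0 ≤ C)
    (h4 : GromovHyperbolicWith (fun a b : X => dist a b) δ) (hG : GeodesicSpace X)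
    (hqc : ∀ A ∈ H, QuasiconvexSet C A) (u v : X)
    {f : ℝ → X} (hf : IsGeodesicSegment f 0 (dist u v)) (hf0 : f 0 = u)
    (hfT : f (dist u v) = v) {s : ℝ} (hs : s ∈ Icc (0:ℝ) (dist u v)) :
    elecDist H u (f s) + elecDist H (f s) v
      ≤ elecDist H u v + (2*(51*δ + C + 12)^2 + 1) := by
  obtain ⟨σ, hch, h1, hcost⟩ := exists_good_chain H hG u v
  obtain ⟨c, hcmem, hcb⟩ := track H hδ0 hC0 h4 hG hqc hch h1 hcost hf hf0 hfT hs
  obtain ⟨i, hi, hie⟩ := List.mem_iff_getElem.1 hcmem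
  have hsplit := elec_split H hch i hi
  rw [hie] at hsplit
  have h1' : elecDist H u (f s) ≤ elecDist H u c + (51*δ + C + 12)^2 := by
    have := elecDist_triangle H u c (f s)
    have h2 : elecDist H c (f s) = elecDist H (f s) c := elecDist_symm H c (f s)
    linarith
  have h2' : elecDist H (f s) v ≤ (51*δ + C + 12)^2 + elecDist H c v := by
    have := elecDist_triangle H (f s) c v
    linarith
  linarith

/-- the key estimate on Gromov products of the electric pseudometric. -/
lemma product_est {δ C : ℝ} (hδ0 : 0 ≤ δ) (hC0 : 0 ≤ C)
    (h4 : GromovHyperbolicWith (fun a b : X => dist a b) δ) (hG : GeodesicSpace X)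
    (hqc : ∀ A ∈ H, QuasiconvexSet C A) (w x y z : X) :
    min (elecDist H w x + elecDist H w z - elecDist H x z)
        (elecDist H w z + elecDist H w y - elecDist H z y)
      ≤ elecDist H w x + elecDist H w y - elecDist H x y
        + (2 + 4*(3*δ + (51*δ + C + 12)^2) + 6*δ + (2*(51*δ + C + 12)^2 + 1)) := by
  classical
  set ρ₀ := (51*δ + C + 12)^2 with hρ₀def
  have hρ₀0 : 0 ≤ ρ₀ := by positivity
  set K₁ := 2*ρ₀ + 1 with hK₁def
  set R' := 3*δ + ρ₀ with hR'def
  have hR'0 : 0 ≤ R' := by rw [hR'def]; linarith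
  set T := dist x y with hTdef
  obtain ⟨f, hf0, hfT, hf⟩ := hG x y
  obtain ⟨gxw, hgxw0, hgxwT, hgxw⟩ := hG x w
  obtain ⟨gwy, hgwy0, hgwyT, hgwy⟩ := hG w y
  obtain ⟨σ₁, hch₁, h1₁, hcost₁⟩ := exists_good_chain H hG x w
  obtain ⟨σ₂, hch₂, h1₂, hcost₂⟩ := exists_good_chain H hG w y
  set a : ℝ → ℝ := fun u => minE H (f u) σ₁ with hadef
  set b : ℝ → ℝ := fun u => minE H (f u) σ₂ with hbdef
  have hminR : ∀ u ∈ Icc (0:ℝ) T, a u ≤ R' ∨ b u ≤ R' := by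
    intro u hu
    rcases slim hδ0 h4 hf hf0 hfT hgxw hgxw0 hgxwT hgwy hgwy0 hgwyT hu with
      ⟨t, ht, hd⟩ | ⟨t, ht, hd⟩
    · left
      obtain ⟨c, hc, hcb⟩ := track H hδ0 hC0 h4 hG hqc hch₁ h1₁ hcost₁ hgxw hgxw0 hgxwT ht
      calc a u ≤ elecDist H (f u) c := minE_le H (f u) hc
        _ ≤ elecDist H (f u) (gxw t) + elecDist H (gxw t) c := elecDist_triangle H _ _ _
        _ ≤ R' := by
            rw [hR'def]
            linarith [elecDist_le_dist H (f u) (gxw t)]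
    · right
      obtain ⟨c, hc, hcb⟩ := track H hδ0 hC0 h4 hG hqc hch₂ h1₂ hcost₂ hgwy hgwy0 hgwyT ht
      calc b u ≤ elecDist H (f u) c := minE_le H (f u) hc
        _ ≤ elecDist H (f u) (gwy t) + elecDist H (gwy t) c := elecDist_triangle H _ _ _
        _ ≤ R' := by
            rw [hR'def]
            linarith [elecDist_le_dist H (f u) (gwy t)]
  have hT0 : 0 ≤ T := dist_nonneg
  have hlip : ∀ u ∈ Icc (0:ℝ) T, ∀ u' ∈ Icc (0:ℝ) T, a u ≤ a u' + |u - u'| := by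
    intro u hu u' hu'
    have h1 := minE_tri H (f u) (f u') (l := σ₁) hch₁.1
    have h2 : elecDist H (f u) (f u') ≤ dist (f u) (f u') := elecDist_le_dist H _ _
    have h3 : dist (f u) (f u') = |u - u'| := hf u hu u' hu'
    rw [hadef]
    simp only
    rw [h3] at h2
    linarith
  have hlipb : ∀ u ∈ Icc (0:ℝ) T, ∀ u' ∈ Icc (0:ℝ) T, b u ≤ b u' + |u - u'| := by
    intro u hu u' hu'
    have h1 := minE_tri H (f u) (f u') (l := σ₂) hch₂.1
    have h2 : elecDist H (f u) (f u') ≤ dist (f u) (f u') := elecDist_le_dist H _ _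
    have h3 : dist (f u) (f u') = |u - u'| := hf u hu u' hu'
    rw [hbdef]
    simp only
    rw [h3] at h2
    linarith
  set S : Set ℝ := {u | u ∈ Icc (0:ℝ) T ∧ a u ≤ R'} with hSdef
  have h0S : (0:ℝ) ∈ S := by
    refine ⟨⟨le_refl 0, hT0⟩, ?_⟩
    have hx1 : x ∈ σ₁ := head_mem_of_isCh hch₁
    have : a 0 ≤ elecDist H (f 0) x := minE_le H (f 0) hx1
    rw [hf0, elecDist_self] at this
    linarith
  have hSne : S.Nonempty := ⟨0, h0S⟩
  have hSbdd : BddAbove S := ⟨T, fun u hu => hu.1.2⟩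
  set u₀ := sSup S with hu₀def
  have hu₀mem : u₀ ∈ Icc (0:ℝ) T :=
    ⟨le_csSup hSbdd h0S, csSup_le hSne fun u hu => hu.1.2⟩
  have hau : a u₀ ≤ R' := by
    refine le_of_forall_pos_le_add fun ε hε => ?_
    obtain ⟨u₁, hu₁S, hu₁lt⟩ := exists_lt_of_lt_csSup hSne
      (show u₀ - ε < sSup S by rw [← hu₀def]; linarith)
    have hu₁le : u₁ ≤ u₀ := le_csSup hSbdd hu₁S
    have := hlip u₀ hu₀mem u₁ hu₁S.1
    have habs : |u₀ - u₁| ≤ ε := by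
      rw [abs_of_nonneg (by linarith)]
      linarith
    linarith [hu₁S.2]
  have hbu : b u₀ ≤ R' := by
    by_cases hend : u₀ = T
    · have hy2 : y ∈ σ₂ := last_mem_of_isCh hch₂
      have : b T ≤ elecDist H (f T) y := minE_le H (f T) hy2
      rw [hfT, elecDist_self] at this
      rw [hend]
      linarith
    · have hu₀T : u₀ < T := lt_of_le_of_ne hu₀mem.2 hend
      refine le_of_forall_pos_le_add fun ε hε => ?_
      set ε' := min ε (T - u₀) with hε'def
      have hε'0 : 0 < ε' := lt_min hε (by linarith)
      set u₁ := u₀ + ε' with hu₁def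
      have hu₁mem : u₁ ∈ Icc (0:ℝ) T := by
        constructor
        · have := hu₀mem.1; rw [hu₁def]; linarith
        · rw [hu₁def, hε'def]
          have := min_le_right ε (T - u₀)
          linarith
      have hu₁nS : u₁ ∉ S := notMem_of_csSup_lt (by rw [← hu₀def, hu₁def]; linarith) hSbdd
      have hau₁ : ¬ a u₁ ≤ R' := fun hc => hu₁nS ⟨hu₁mem, hc⟩
      have hbu₁ : b u₁ ≤ R' := by
        rcases hminR u₁ hu₁mem with h | h
        · exact absurd h hau₁
        · exact h
      have := hlipb u₀ hu₀mem u₁ hu₁mem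
      have habs : |u₀ - u₁| ≤ ε := by
        rw [abs_of_nonpos (by rw [hu₁def]; linarith), hu₁def]
        have := min_le_left ε (T - u₀)
        simp only [neg_sub]
        linarith
      linarith
  set p := f u₀ with hpdef
  -- bound e w p from the side of x
  have hside1 : elecDist H w p ≤ elecDist H x w + 1 - elecDist H x p + 2*R' := by
    obtain ⟨c₁, hc₁mem, hc₁e⟩ := exists_minE H p hch₁.1
    have hc₁R : elecDist H p c₁ ≤ R' := by rw [← hc₁e]; exact hau
    obtain ⟨i, hi, hie⟩ := List.mem_iff_getElem.1 hc₁mem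
    have hsp := elec_split H hch₁ i hi
    rw [hie] at hsp
    have htr1 : elecDist H w p ≤ elecDist H c₁ w + elecDist H p c₁ := by
      have h1 := elecDist_triangle H w c₁ p
      have h2 : elecDist H w c₁ = elecDist H c₁ w := elecDist_symm H w c₁
      have h3 : elecDist H c₁ p = elecDist H p c₁ := elecDist_symm H c₁ p
      linarith
    have htr2 : elecDist H x p ≤ elecDist H x c₁ + elecDist H p c₁ := by
      have := elecDist_triangle H x c₁ p
      rw [elecDist_symm H c₁ p] at this
      linarith
    linarith
  -- bound e w p from the side of y
  have hside2 : elecDist H w p ≤ elecDist H w y + 1 - elecDist H p y + 2*R' := by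
    obtain ⟨c₂, hc₂mem, hc₂e⟩ := exists_minE H p hch₂.1
    have hc₂R : elecDist H p c₂ ≤ R' := by rw [← hc₂e]; exact hbu
    obtain ⟨i, hi, hie⟩ := List.mem_iff_getElem.1 hc₂mem
    have hsp := elec_split H hch₂ i hi
    rw [hie] at hsp
    have htr1 : elecDist H w p ≤ elecDist H w c₂ + elecDist H p c₂ := by
      have := elecDist_triangle H w c₂ p
      rw [elecDist_symm H c₂ p] at this
      linarith
    have htr2 : elecDist H p y ≤ elecDist H p c₂ + elecDist H c₂ y :=
      elecDist_triangle H p c₂ y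
    linarith
  have hewp : 2 * elecDist H w p
      ≤ elecDist H x w + elecDist H w y + 2 - elecDist H x y + 4*R' := by
    have htri : elecDist H x y ≤ elecDist H x p + elecDist H p y := elecDist_triangle H x p y
    linarith
  -- now compare the two cross products via the thin triangle (x, y, z)
  obtain ⟨gxz, hgxz0, hgxzT, hgxz⟩ := hG x z
  obtain ⟨gzy, hgzy0, hgzyT, hgzy⟩ := hG z y
  rcases slim hδ0 h4 hf hf0 hfT hgxz hgxz0 hgxzT hgzy hgzy0 hgzyT hu₀mem with
    ⟨t, ht, hd⟩ | ⟨t, ht, hd⟩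
  · -- close to [x, z] : bound the product with z on the x side
    apply le_trans (min_le_left _ _)
    set q' := gxz t with hq'def
    have htaut := taut H hδ0 hC0 h4 hG hqc x z hgxz hgxz0 hgxzT ht
    have hewq : elecDist H w q' ≤ elecDist H w p + 3*δ := by
      have h1 := elecDist_triangle H w p q'
      have h2 : elecDist H p q' ≤ dist p q' := elecDist_le_dist H p q'
      have h3 : dist p q' = dist (f u₀) (gxz t) := rfl
      linarith
    have hwx : elecDist H w x ≤ elecDist H w q' + elecDist H x q' := by
      have := elecDist_triangle H w q' x
      rw [elecDist_symm H q' x] at this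
      linarith
    have hwz : elecDist H w z ≤ elecDist H w q' + elecDist H q' z := by
      have := elecDist_triangle H w q' z
      linarith
    have hx2 : elecDist H x q' = elecDist H x (gxz t) := rfl
    have hz2 : elecDist H q' z = elecDist H (gxz t) z := rfl
    have hxw : elecDist H w x = elecDist H x w := elecDist_symm H w x
    -- combine
    have : elecDist H w x + elecDist H w z - elecDist H x z
        ≤ 2 * elecDist H w q' + K₁ := by
      rw [hK₁def]
      have := htaut
      linarith [hx2 ▸ hwx]
    linarith
  · apply le_trans (min_le_right _ _)
    set q' := gzy t with hq'def
    have htaut := taut H hδ0 hC0 h4 hG hqc z y hgzy hgzy0 hgzyT ht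
    have hewq : elecDist H w q' ≤ elecDist H w p + 3*δ := by
      have h1 := elecDist_triangle H w p q'
      have h2 : elecDist H p q' ≤ dist p q' := elecDist_le_dist H p q'
      linarith
    have hwz : elecDist H w z ≤ elecDist H w q' + elecDist H z q' := by
      have := elecDist_triangle H w q' z
      rw [elecDist_symm H q' z] at this
      linarith
    have hwy : elecDist H w y ≤ elecDist H w q' + elecDist H q' y := by
      have := elecDist_triangle H w q' y
      linarith
    have hxw : elecDist H w x = elecDist H x w := elecDist_symm H w x
    have : elecDist H w z + elecDist H w y - elecDist H z y
        ≤ 2 * elecDist H w q' + K₁ := by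
      rw [hK₁def]
      have h5 : elecDist H z (gzy t) + elecDist H (gzy t) y
          ≤ elecDist H z y + (2*ρ₀ + 1) := htaut
      linarith
    linarith

/-- the four-point condition for the electric pseudometric. -/
lemma fourpoint {δ C : ℝ} (hδ0 : 0 ≤ δ) (hC0 : 0 ≤ C)
    (h4 : GromovHyperbolicWith (fun a b : X => dist a b) δ) (hG : GeodesicSpace X)
    (hqc : ∀ A ∈ H, QuasiconvexSet C A) :
    GromovHyperbolicWith (elecDist H)
      ((2 + 4*(3*δ + (51*δ + C + 12)^2) + 6*δ + (2*(51*δ + C + 12)^2 + 1))/2) := by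
  intro x y z w
  have hkey := product_est H hδ0 hC0 h4 hG hqc w x y z
  have e1 : elecDist H z w = elecDist H w z := elecDist_symm H z w
  have e2 : elecDist H y w = elecDist H w y := elecDist_symm H y w
  have e3 : elecDist H w x = elecDist H x w := elecDist_symm H w x
  have e4 : elecDist H x w = elecDist H w x := elecDist_symm H x w
  have e5 : elecDist H y z = elecDist H z y := elecDist_symm H y z
  rcases min_le_iff.1 (le_refl (min (elecDist H w x + elecDist H w z - elecDist H x z)
      (elecDist H w z + elecDist H w y - elecDist H z y))) with h | h
  · rcases le_total (elecDist H w x + elecDist H w z - elecDist H x z)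
        (elecDist H w z + elecDist H w y - elecDist H z y) with hmm | hmm
    · have hmin : min (elecDist H w x + elecDist H w z - elecDist H x z)
          (elecDist H w z + elecDist H w y - elecDist H z y)
          = elecDist H w x + elecDist H w z - elecDist H x z := min_eq_left hmm
      rw [hmin] at hkey
      have : elecDist H x y + elecDist H z w
          ≤ elecDist H x z + elecDist H y w
            + 2 * ((2 + 4*(3*δ + (51*δ + C + 12)^2) + 6*δ + (2*(51*δ + C + 12)^2 + 1))/2) := by
        rw [e1, e2]
        ring_nf
        ring_nf at hkey
        linarith
      exact le_trans this (by
        have := le_max_left (elecDist H x z + elecDist H y w)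
          (elecDist H x w + elecDist H y z)
        linarith)
    · have hmin : min (elecDist H w x + elecDist H w z - elecDist H x z)
          (elecDist H w z + elecDist H w y - elecDist H z y)
          = elecDist H w z + elecDist H w y - elecDist H z y := min_eq_right hmm
      rw [hmin] at hkey
      have : elecDist H x y + elecDist H z w
          ≤ elecDist H x w + elecDist H y z
            + 2 * ((2 + 4*(3*δ + (51*δ + C + 12)^2) + 6*δ + (2*(51*δ + C + 12)^2 + 1))/2) := by
        rw [e1, e4, e5]
        ring_nf
        ring_nf at hkey
        linarith
      exact le_trans this (by
        have := le_max_right (elecDist H x z + elecDist H y w)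
          (elecDist H x w + elecDist H y z)
        linarith)
  · rcases le_total (elecDist H w x + elecDist H w z - elecDist H x z)
        (elecDist H w z + elecDist H w y - elecDist H z y) with hmm | hmm
    · have hmin : min (elecDist H w x + elecDist H w z - elecDist H x z)
          (elecDist H w z + elecDist H w y - elecDist H z y)
          = elecDist H w x + elecDist H w z - elecDist H x z := min_eq_left hmm
      rw [hmin] at hkey
      have : elecDist H x y + elecDist H z w
          ≤ elecDist H x z + elecDist H y w
            + 2 * ((2 + 4*(3*δ + (51*δ + C + 12)^2) + 6*δ + (2*(51*δ + C + 12)^2 + 1))/2) := by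
        rw [e1, e2]
        ring_nf
        ring_nf at hkey
        linarith
      exact le_trans this (by
        have := le_max_left (elecDist H x z + elecDist H y w)
          (elecDist H x w + elecDist H y z)
        linarith)
    · have hmin : min (elecDist H w x + elecDist H w z - elecDist H x z)
          (elecDist H w z + elecDist H w y - elecDist H z y)
          = elecDist H w z + elecDist H w y - elecDist H z y := min_eq_right hmm
      rw [hmin] at hkey
      have : elecDist H x y + elecDist H z w
          ≤ elecDist H x w + elecDist H y z
            + 2 * ((2 + 4*(3*δ + (51*δ + C + 12)^2) + 6*δ + (2*(51*δ + C + 12)^2 + 1))/2) := by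
        rw [e1, e4, e5]
        ring_nf
        ring_nf at hkey
        linarith
      exact le_trans this (by
        have := le_max_right (elecDist H x z + elecDist H y w)
          (elecDist H x w + elecDist H y z)
        linarith)

end ES

theorem electric_space_hyperbolic' (δ C : ℝ) :
    ∃ Δ : ℝ, ∀ (X : Type) [_inst : MetricSpace X], ∀ (H : Set (Set X)),
      GromovHyperbolicWith (fun a b : X => dist a b) δ →
      GeodesicSpace X →
      (∀ A ∈ H, QuasiconvexSet C A) →
      GromovHyperbolicWith (elecDist H) Δ := by
  refine ⟨(2 + 4*(3*(max δ 0) + (51*(max δ 0) + (max C 0) + 12)^2) + 6*(max δ 0)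
      + (2*(51*(max δ 0) + (max C 0) + 12)^2 + 1))/2, ?_⟩
  intro X _inst H h4 hG hqc
  have hδ0 : (0:ℝ) ≤ max δ 0 := le_max_right δ 0
  have hC0 : (0:ℝ) ≤ max C 0 := le_max_right C 0
  have h4' : GromovHyperbolicWith (fun a b : X => dist a b) (max δ 0) := by
    intro a b c d
    have h := h4 a b c d
    have : 2*δ ≤ 2*(max δ 0) := by
      have := le_max_left δ 0
      linarith
    simp only at h ⊢
    linarith
  have hqc' : ∀ A ∈ H, QuasiconvexSet (max C 0) A := by
    intro A hA x hx y hy f s t hf hfs hft u hu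
    exact le_trans (hqc A hA x hx y hy f s t hf hfs hft u hu) (le_max_left C 0)
  exact ES.fourpoint H hδ0 hC0 h4' hG hqc'


/-- Relative hyperbolicity (Farb): if `X` is a `δ`-hyperbolic geodesic space and `H` a
collection of uniformly `C`-quasiconvex subsets, then the electric space `E(X, H)` is
`Δ`-hyperbolic for some `Δ` depending only on `δ` and `C`; in particular `X` is weakly
hyperbolic relative to `H`. -/
theorem electric_space_hyperbolic (δ C : ℝ) :
    ∃ Δ : ℝ, ∀ (X : Type) [_inst : MetricSpace X], ∀ (H : Set (Set X)),
      GromovHyperbolicWith (fun a b : X => dist a b) δ →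
      GeodesicSpace X →
      (∀ A ∈ H, QuasiconvexSet C A) →
      GromovHyperbolicWith (elecDist H) Δ :=
  electric_space_hyperbolic' δ C
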